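/- Branch-depth of a matroid is at most its contraction-deletion-depth: for every matroid M, bd(M) ≤ cdd(M), where contracting or deleting a single element decreases the relevant connectivity by at most one at each level. -/

import Mathlib

/-- The rank of a set in a matroid: the largest cardinality of an
independent subset. -/
noncomputable def mrank {α : Type*} (M : Matroid α) (X : Set α) : ℕ :=
  sSup {n : ℕ | ∃ I, I ⊆ X ∧ M.Indep I ∧ I.ncard = n}

/-- The two-parameter connectivity function λ_M(X, Y) = r(X) + r(Y) - r(X ∪ Y). -/
noncomputable def mlambda {α : Type*} (M : Matroid α) (X Y : Set α) : ℤ :=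
  (mrank M X : ℤ) + mrank M Y - mrank M (X ∪ Y)

/-- `a` and `b` are both different from `v` and connected in the graph `G - v`. -/
def offRel {V : Type*} (G : SimpleGraph V) (v a b : V) : Prop :=
  ∃ (ha : a ≠ v) (hb : b ≠ v),
    (G.comap (Subtype.val : {x : V // x ≠ v} → V)).Reachable ⟨a, ha⟩ ⟨b, hb⟩

/-- `S` is a union of connected components of the graph `G - v`. -/
def UnionOfParts {V : Type*} (G : SimpleGraph V) (v : V) (S : Set V) : Prop :=
  v ∉ S ∧ ∀ a ∈ S, ∀ b, offRel G v a b → b ∈ S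

/-- A vertex with at most one neighbour. -/
def IsLeaf {V : Type*} (G : SimpleGraph V) (v : V) : Prop :=
  ∀ u w, G.Adj v u → G.Adj v w → u = w

/-- A `(d,r)`-decomposition of a matroid `M`: a tree of radius `d` whose leaves are
bijectively labelled by the elements of `M` such that for every inner vertex `v` and
every union `S` of components of `T - v`, the connectivity of the set of elements
labelling leaves in `S` is at most `r` (this is equivalent to `λ*` of the partition
given by the components of `T - v` being at most `r`). -/
structure Decomp {α : Type*} (M : Matroid α) (d r : ℕ) where
  V : Type
  fin : Fintype V
  G : SimpleGraph V
  tree : G.IsTree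
  center : V
  radius_le : ∀ v, G.dist center v ≤ d
  radius_ge : ∀ w : V, ∃ v, d ≤ G.dist w v
  label : V → α
  label_mem : ∀ v, IsLeaf G v → label v ∈ M.E
  label_inj : ∀ v w, IsLeaf G v → IsLeaf G w → label v = label w → v = w
  label_surj : ∀ e ∈ M.E, ∃ v, IsLeaf G v ∧ label v = e
  conn : ∀ v, ¬ IsLeaf G v → ∀ S : Set V, UnionOfParts G v S →
    mlambda M (label '' {u ∈ S | IsLeaf G u})
      (M.E \ label '' {u ∈ S | IsLeaf G u}) ≤ r

/-- `bd(M) ≤ k`: the matroid `M` admits a `(d,r)`-decomposition with `d ≤ k`, `r ≤ k`. -/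
def HasBranchDepthLE {α : Type*} (M : Matroid α) (k : ℕ) : Prop :=
  ∃ d r, d ≤ k ∧ r ≤ k ∧ Nonempty (Decomp M d r)

/-- A circuit: a minimal dependent set. -/
def IsCircuit {α : Type*} (M : Matroid α) (C : Set α) : Prop :=
  C ⊆ M.E ∧ ¬ M.Indep C ∧ ∀ D ⊂ C, M.Indep D

/-- Two elements are connected if they are equal or lie on a common circuit. -/
def ConnTo {α : Type*} (M : Matroid α) (e f : α) : Prop :=
  e = f ∨ ∃ C, IsCircuit M C ∧ e ∈ C ∧ f ∈ C

/-- The component of an element `e` of a matroid. -/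
def component {α : Type*} (M : Matroid α) (e : α) : Set α :=
  {f ∈ M.E | ConnTo M e f}

/-- A matroid is connected if any two of its elements lie on a common circuit. -/
def MConnected {α : Type*} (M : Matroid α) : Prop :=
  M.E.Nonempty ∧ ∀ e ∈ M.E, ∀ f ∈ M.E, ConnTo M e f

/-- `N` is obtained from `M` by contracting the (non-loop) element `e`. -/
def ContractElem {α : Type*} (M N : Matroid α) (e : α) : Prop :=
  N.E = M.E \ {e} ∧ ∀ I, N.Indep I ↔ I ⊆ M.E \ {e} ∧ M.Indep (insert e I)

/-- `CddLE M d` means that the contraction-deletion-depth of `M` is at most `d`: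
a single-element matroid has depth `1`; the depth of a disconnected matroid is the
maximum depth of its components; and otherwise one may contract a non-loop element
or delete an element at the cost of one level. -/
inductive CddLE {α : Type*} : Matroid α → ℕ → Prop where
  | single (M : Matroid α) (e : α) (d : ℕ) : M.E = {e} → 1 ≤ d → CddLE M d
  | disconn (M : Matroid α) (d : ℕ) : M.E.Nonempty → ¬ MConnected M →
      (∀ e ∈ M.E, CddLE (M.restrict (component M e)) d) → CddLE M d
  | contr (M N : Matroid α) (e : α) (d : ℕ) : e ∈ M.E → M.Indep {e} →
      ContractElem M N e → CddLE N d → CddLE M (d + 1)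
  | del (M : Matroid α) (e : α) (d : ℕ) : e ∈ M.E →
      CddLE (M.restrict (M.E \ {e})) d → CddLE M (d + 1)


namespace BD
open Set

section Rank
variable {α : Type*} {M : Matroid α} {X Y A B I J C C₁ C₂ D R : Set α} {a e f g x y : α}

lemma indep_finite [M.Finite] (hI : M.Indep I) : I.Finite :=
  M.ground_finite.subset hI.subset_ground

lemma bdd [M.Finite] : BddAbove {n : ℕ | ∃ I, I ⊆ X ∧ M.Indep I ∧ I.ncard = n} := by
  refine ⟨M.E.ncard, ?_⟩
  rintro n ⟨I, _, hI, rfl⟩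
  exact Set.ncard_le_ncard hI.subset_ground M.ground_finite

lemma ne_empty : {n : ℕ | ∃ I, I ⊆ X ∧ M.Indep I ∧ I.ncard = n}.Nonempty :=
  ⟨0, ∅, empty_subset _, M.empty_indep, by simp⟩

lemma le_mrank [M.Finite] (hIX : I ⊆ X) (hI : M.Indep I) : I.ncard ≤ mrank M X :=
  le_csSup bdd ⟨I, hIX, hI, rfl⟩

lemma exists_mrank_witness (M : Matroid α) [M.Finite] (X : Set α) :
    ∃ I, I ⊆ X ∧ M.Indep I ∧ I.ncard = mrank M X := by
  have := Nat.sSup_mem (s := {n : ℕ | ∃ I, I ⊆ X ∧ M.Indep I ∧ I.ncard = n}) ne_empty bdd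
  exact this

lemma mrank_le [M.Finite] {n : ℕ} (h : ∀ I, I ⊆ X → M.Indep I → I.ncard ≤ n) :
    mrank M X ≤ n := by
  refine csSup_le ne_empty ?_
  rintro m ⟨I, hIX, hI, rfl⟩
  exact h I hIX hI

lemma mrank_mono [M.Finite] (h : X ⊆ Y) : mrank M X ≤ mrank M Y := by
  refine mrank_le fun I hIX hI => le_mrank (hIX.trans h) hI

lemma mrank_le_ncard [M.Finite] (hX : X.Finite) : mrank M X ≤ X.ncard :=
  mrank_le fun I hIX _ => Set.ncard_le_ncard hIX hX

lemma mrank_indep [M.Finite] (hI : M.Indep I) : mrank M I = I.ncard :=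
  le_antisymm (mrank_le_ncard (indep_finite hI)) (le_mrank subset_rfl hI)

lemma mrank_empty (M : Matroid α) [M.Finite] : mrank M (∅ : Set α) = 0 := by
  simpa using mrank_indep M.empty_indep

lemma mrank_insert_le [M.Finite] : mrank M (insert a X) ≤ mrank M X + 1 := by
  refine mrank_le fun I hIX hI => ?_
  have h1 : I \ {a} ⊆ X := by
    intro x hx
    rcases hIX hx.1 with h | h
    · exact absurd h hx.2
    · exact h
  have h2 : (I \ {a}).ncard ≤ mrank M X := le_mrank h1 (hI.subset diff_subset)
  have h3 : I.ncard ≤ (I \ {a}).ncard + 1 := by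
    rcases Classical.em (a ∈ I) with h | h
    · have := Set.ncard_diff_singleton_add_one h (indep_finite hI)
      omega
    · rw [Set.diff_singleton_eq_self h]; omega
  omega

lemma mrank_inter_ground (M : Matroid α) [M.Finite] (X : Set α) :
    mrank M (X ∩ M.E) = mrank M X := by
  refine le_antisymm (mrank_mono inter_subset_left) (mrank_le fun I hIX hI => ?_)
  exact le_mrank (subset_inter hIX hI.subset_ground) hI

lemma exists_mrank_extension [M.Finite] (hI : M.Indep I) (hIX : I ⊆ X) :
    ∃ J, I ⊆ J ∧ J ⊆ X ∧ M.Indep J ∧ J.ncard = mrank M X := by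
  obtain ⟨J, hJ, hIJ⟩ := hI.subset_isBasis_of_subset (X := X ∩ M.E)
    (subset_inter hIX hI.subset_ground) inter_subset_right
  refine ⟨J, hIJ, hJ.subset.trans inter_subset_left, hJ.indep, le_antisymm
    (le_mrank (hJ.subset.trans inter_subset_left) hJ.indep) ?_⟩
  obtain ⟨I', hI'X, hI', hcard⟩ := exists_mrank_witness M X
  obtain ⟨J', hJ', hI'J'⟩ := hI'.subset_isBasis_of_subset (X := X ∩ M.E)
    (subset_inter hI'X hI'.subset_ground) inter_subset_right
  have hc : J'.ncard = J.ncard := by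
    have := hJ'.encard_eq_encard hJ
    rw [Set.ncard_def, Set.ncard_def, this]
  calc mrank M X = I'.ncard := hcard.symm
    _ ≤ J'.ncard := Set.ncard_le_ncard hI'J' (indep_finite hJ'.indep)
    _ = J.ncard := hc

lemma mrank_submod (M : Matroid α) [M.Finite] (A B : Set α) (hA : A ⊆ M.E) (hB : B ⊆ M.E) :
    mrank M (A ∪ B) + mrank M (A ∩ B) ≤ mrank M A + mrank M B := by
  obtain ⟨I, hIX, hI, hIcard⟩ := exists_mrank_witness M (A ∩ B)
  obtain ⟨J, hIJ, hJX, hJ, hJcard⟩ := exists_mrank_extension hI (hIX.trans inter_subset_left |>.trans subset_union_left)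
  have hJfin := indep_finite hJ
  have h1 : (J ∩ A).ncard ≤ mrank M A := le_mrank inter_subset_right (hJ.subset inter_subset_left)
  have h2 : (J ∩ B).ncard ≤ mrank M B := le_mrank inter_subset_right (hJ.subset inter_subset_left)
  have hUn : J ∩ A ∪ J ∩ B = J := by
    rw [← inter_union_distrib_left]; exact inter_eq_left.mpr hJX
  have hInt : (J ∩ A) ∩ (J ∩ B) = J ∩ (A ∩ B) := by
    ext x; simp [and_assoc]; tauto
  have hie := Set.ncard_union_add_ncard_inter (J ∩ A) (J ∩ B)
    (hJfin.subset inter_subset_left) (hJfin.subset inter_subset_left)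
  rw [hUn, hInt] at hie
  have h3 : mrank M (A ∩ B) ≤ (J ∩ (A ∩ B)).ncard := by
    rw [← hIcard]
    exact Set.ncard_le_ncard (subset_inter hIJ hIX) (hJfin.subset inter_subset_left)
  omega

lemma mlambda_le_ncard [M.Finite] (hX : X.Finite) : mlambda M X Y ≤ (X.ncard : ℤ) := by
  have h1 : mrank M Y ≤ mrank M (X ∪ Y) := mrank_mono subset_union_right
  have h2 : mrank M X ≤ X.ncard := mrank_le_ncard hX
  unfold mlambda; push_cast; omega

lemma mlambda_le_ncard_right [M.Finite] (hY : Y.Finite) : mlambda M X Y ≤ (Y.ncard : ℤ) := by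
  have h1 : mrank M X ≤ mrank M (X ∪ Y) := mrank_mono subset_union_left
  have h2 : mrank M Y ≤ Y.ncard := mrank_le_ncard hY
  unfold mlambda; push_cast; omega

lemma mlambda_empty (M : Matroid α) [M.Finite] (Y : Set α) : mlambda M ∅ Y = 0 := by
  unfold mlambda
  rw [mrank_empty, Set.empty_union]; simp

lemma mlambda_self_compl (M : Matroid α) [M.Finite] (Y : Set α) : mlambda M Y (Y \ Y) = 0 := by
  unfold mlambda
  simp [Set.diff_self, mrank_empty]


end Rank

section Circ
variable {α : Type*} {M : Matroid α} {X Y A B I J C C₁ C₂ D R : Set α} {a e f g x y : α}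

/-! ### Circuits -/

lemma circuit_subset_ground (h : IsCircuit M C) : C ⊆ M.E := h.1

lemma circuit_finite [M.Finite] (h : IsCircuit M C) : C.Finite :=
  M.ground_finite.subset h.1

lemma circuit_nonempty (h : IsCircuit M C) : C.Nonempty := by
  rcases Set.eq_empty_or_nonempty C with rfl | h'
  · exact absurd M.empty_indep h.2.1
  · exact h'

lemma circuit_ncard_pos [M.Finite] (h : IsCircuit M C) : 1 ≤ C.ncard :=
  (Set.ncard_pos (circuit_finite h)).mpr (circuit_nonempty h)

lemma circuit_not_ssubset (h : IsCircuit M C) (h' : IsCircuit M D) : ¬ (C ⊂ D) :=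
  fun hss => h.2.1 (h'.2.2 C hss)

lemma circuit_subset_eq (h : IsCircuit M C) (h' : IsCircuit M D) (hss : C ⊆ D) : C = D := by
  rcases eq_or_ssubset_of_subset hss with h1 | h1
  · exact h1
  · exact absurd h1 (circuit_not_ssubset h h')

lemma mrank_circuit [M.Finite] (h : IsCircuit M C) : mrank M C = C.ncard - 1 := by
  obtain ⟨c, hc⟩ := circuit_nonempty h
  have hfin := circuit_finite h
  have h1 : (C \ {c}).ncard ≤ mrank M C :=
    le_mrank diff_subset (h.2.2 _ (Set.sdiff_singleton_ssubset.mpr hc))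
  have h2 : mrank M C ≤ C.ncard := mrank_le_ncard hfin
  have h3 : mrank M C ≠ C.ncard := by
    intro heq
    obtain ⟨I, hIC, hI, hcard⟩ := exists_mrank_witness M C
    have : I = C := Set.eq_of_subset_of_ncard_le hIC (by omega) hfin
    exact h.2.1 (this ▸ hI)
  have h4 := Set.ncard_diff_singleton_add_one hc hfin
  omega

lemma exists_circuit_subset [M.Finite] (hD : D ⊆ M.E) (hdep : ¬ M.Indep D) :
    ∃ C, C ⊆ D ∧ IsCircuit M C := by
  have hfin : D.Finite := M.ground_finite.subset hD
  generalize hn : D.ncard = n at *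
  induction n using Nat.strong_induction_on generalizing D with
  | _ n ih =>
    by_cases h : ∀ D' ⊂ D, M.Indep D'
    · exact ⟨D, subset_rfl, hD, hdep, h⟩
    · push_neg at h
      obtain ⟨D', hss, hdep'⟩ := h
      obtain ⟨C, hCD, hC⟩ := ih D'.ncard (hn ▸ Set.ncard_lt_ncard hss hfin)
        (hss.subset.trans hD) hdep' (hfin.subset hss.subset) rfl
      exact ⟨C, hCD.trans hss.subset, hC⟩

lemma weak_elim [M.Finite] (h1 : IsCircuit M C₁) (h2 : IsCircuit M C₂) (hne : C₁ ≠ C₂)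
    (hx : x ∈ C₁ ∩ C₂) : ∃ C, IsCircuit M C ∧ C ⊆ (C₁ ∪ C₂) \ {x} := by
  have hficup : (C₁ ∪ C₂).Finite := (circuit_finite h1).union (circuit_finite h2)
  have hsub : (C₁ ∪ C₂) \ {x} ⊆ M.E := (diff_subset).trans (union_subset h1.1 h2.1)
  have hdep : ¬ M.Indep ((C₁ ∪ C₂) \ {x}) := by
    intro hind
    have hr1 : (C₁ ∪ C₂).ncard - 1 ≤ mrank M (C₁ ∪ C₂) := by
      have := le_mrank (M := M) (X := C₁ ∪ C₂) diff_subset hind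
      have := Set.ncard_diff_singleton_add_one (s := C₁ ∪ C₂) (Set.mem_union_left _ hx.1) hficup
      omega
    have hii : M.Indep (C₁ ∩ C₂) := by
      refine h1.2.2 _ ?_
      refine ssubset_of_subset_of_ne inter_subset_left fun hEq => ?_
      have : C₁ ⊆ C₂ := by rw [← hEq]; exact inter_subset_right
      exact hne (circuit_subset_eq h1 h2 this)
    have hsm := mrank_submod M C₁ C₂ h1.1 h2.1
    rw [mrank_circuit h1, mrank_circuit h2, mrank_indep hii] at hsm
    have hie := Set.ncard_union_add_ncard_inter C₁ C₂ (circuit_finite h1) (circuit_finite h2)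
    have c1 := circuit_ncard_pos h1
    have c2 := circuit_ncard_pos h2
    omega
  obtain ⟨C, hCsub, hC⟩ := exists_circuit_subset hsub hdep
  exact ⟨C, hC, hCsub⟩

lemma strong_elim [M.Finite] (h1 : IsCircuit M C₁) (h2 : IsCircuit M C₂)
    (hx : x ∈ C₁ ∩ C₂) (hy : y ∈ C₁ \ C₂) :
    ∃ D, IsCircuit M D ∧ y ∈ D ∧ D ⊆ (C₁ ∪ C₂) \ {x} := by
  have hfin : (C₁ ∪ C₂).Finite := (circuit_finite h1).union (circuit_finite h2)
  generalize hn : (C₁ ∪ C₂).ncard = n at *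
  induction n using Nat.strong_induction_on generalizing C₁ C₂ x y with
  | _ n ih =>
  have hne : C₁ ≠ C₂ := fun h => hy.2 (h ▸ hy.1)
  obtain ⟨D₀, hD₀, hD₀sub⟩ := weak_elim h1 h2 hne hx
  by_cases hyD : y ∈ D₀
  · exact ⟨D₀, hD₀, hyD, hD₀sub⟩
  have hD₀C1 : ¬ D₀ ⊆ C₁ := by
    intro hss
    have : D₀ = C₁ := circuit_subset_eq hD₀ h1 hss
    exact ((hD₀sub (this ▸ hx.1)).2) rfl
  obtain ⟨z, hzD₀, hzC1⟩ : ∃ z, z ∈ D₀ ∧ z ∉ C₁ := by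
    rcases Set.not_subset.mp hD₀C1 with ⟨z, hz1, hz2⟩; exact ⟨z, hz1, hz2⟩
  have hzC2 : z ∈ C₂ := by
    rcases (hD₀sub hzD₀).1 with h | h
    · exact absurd h hzC1
    · exact h
  -- strong elim on (C₂, D₀), remove z, keep x
  have hxC2D0 : x ∈ C₂ \ D₀ := ⟨hx.2, fun h => (hD₀sub h).2 rfl⟩
  have hm1 : (C₂ ∪ D₀).ncard < n := by
    rw [← hn]
    refine Set.ncard_lt_ncard ?_ hfin
    refine ssubset_of_subset_of_ne ?_ fun hEq => ?_
    · exact union_subset (subset_union_right) (hD₀sub.trans (diff_subset.trans subset_rfl))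
    · have : y ∈ C₂ ∪ D₀ := hEq ▸ Set.mem_union_left _ hy.1
      rcases this with h | h
      · exact hy.2 h
      · exact hyD h
  obtain ⟨C₃, hC₃, hxC₃, hC₃sub⟩ := ih _ hm1 h2 hD₀ ⟨hzC2, hzD₀⟩ hxC2D0
    ((circuit_finite h2).union (circuit_finite hD₀)) rfl
  -- now (C₁, C₃), remove x, keep y
  have hyC₃ : y ∉ C₃ := by
    intro h
    rcases (hC₃sub h).1 with h' | h'
    · exact hy.2 h'
    · exact hyD h'
  have hm2 : (C₁ ∪ C₃).ncard < n := by
    rw [← hn]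
    refine Set.ncard_lt_ncard ?_ hfin
    refine ssubset_of_subset_of_ne (union_subset subset_union_left ?_) fun hEq => ?_
    · intro w hw
      rcases (hC₃sub hw).1 with h' | h'
      · exact Set.mem_union_right _ h'
      · exact (hD₀sub h').1
    · have : z ∈ C₁ ∪ C₃ := hEq ▸ Set.mem_union_right _ hzC2
      rcases this with h | h
      · exact hzC1 h
      · exact (hC₃sub h).2 rfl
  obtain ⟨D, hD, hyD', hDsub⟩ := ih _ hm2 h1 hC₃ ⟨hx.1, hxC₃⟩ ⟨hy.1, hyC₃⟩
    ((circuit_finite h1).union (circuit_finite hC₃)) rfl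
  refine ⟨D, hD, hyD', hDsub.trans ?_⟩
  intro w hw
  refine ⟨?_, hw.2⟩
  rcases hw.1 with h | h
  · exact Set.mem_union_left _ h
  · rcases (hC₃sub h).1 with h' | h'
    · exact Set.mem_union_right _ h'
    · exact (hD₀sub h').1

lemma exists_circuit_both [M.Finite] (h1 : IsCircuit M C₁) (h2 : IsCircuit M C₂)
    (he : e ∈ C₁) (hg : g ∈ C₂) (hf : f ∈ C₁ ∩ C₂) :
    ∃ C, IsCircuit M C ∧ e ∈ C ∧ g ∈ C := by
  have hfin : (C₁ ∪ C₂).Finite := (circuit_finite h1).union (circuit_finite h2)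
  generalize hn : (C₁ ∪ C₂).ncard = n at *
  induction n using Nat.strong_induction_on generalizing C₁ C₂ f with
  | _ n ih =>
  by_cases hgC1 : g ∈ C₁
  · exact ⟨C₁, h1, he, hgC1⟩
  by_cases heC2 : e ∈ C₂
  · exact ⟨C₂, h2, heC2, hg⟩
  obtain ⟨C₃, hC₃, heC₃, hC₃sub⟩ := strong_elim h1 h2 hf ⟨he, heC2⟩
  by_cases hgC₃ : g ∈ C₃
  · exact ⟨C₃, hC₃, heC₃, hgC₃⟩
  have hC₃C1 : ¬ C₃ ⊆ C₁ := by
    intro hss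
    have : C₃ = C₁ := circuit_subset_eq hC₃ h1 hss
    exact (hC₃sub (this ▸ hf.1)).2 rfl
  obtain ⟨h', hhC₃, hhC1⟩ := Set.not_subset.mp hC₃C1
  have hhC2 : h' ∈ C₂ := by
    rcases (hC₃sub hhC₃).1 with h | h
    · exact absurd h hhC1
    · exact h
  -- strong elim on (C₂, C₃) remove h' keep g
  obtain ⟨C₄, hC₄, hgC₄, hC₄sub⟩ := strong_elim h2 hC₃ ⟨hhC2, hhC₃⟩ ⟨hg, hgC₃⟩
  have hC₄C12 : C₄ ⊆ C₁ ∪ C₂ := by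
    intro w hw
    rcases (hC₄sub hw).1 with h | h
    · exact Set.mem_union_right _ h
    · rcases (hC₃sub h).1 with h'' | h''
      · exact Set.mem_union_left _ h''
      · exact Set.mem_union_right _ h''
  by_cases hfC₄ : f ∈ C₄
  · -- recurse with (C₁, C₄, f)
    have hm : (C₁ ∪ C₄).ncard < n := by
      rw [← hn]
      refine Set.ncard_lt_ncard (ssubset_of_subset_of_ne
        (union_subset subset_union_left hC₄C12) fun hEq => ?_) hfin
      have : h' ∈ C₁ ∪ C₄ := hEq ▸ Set.mem_union_right _ hhC2
      rcases this with h | h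
      · exact hhC1 h
      · exact (hC₄sub h).2 rfl
    exact ih _ hm h1 hC₄ he hgC₄ ⟨hf.1, hfC₄⟩ ((circuit_finite h1).union (circuit_finite hC₄)) rfl
  · -- recurse with (C₃, C₄, w)
    have hC₃C₄ : ∃ w, w ∈ C₃ ∩ C₄ := by
      by_contra hcon
      push_neg at hcon
      have : C₄ ⊆ C₂ := by
        intro w hw
        rcases (hC₄sub hw).1 with h | h
        · exact h
        · exact absurd (Set.mem_inter h hw) (fun hc => hcon w hc)
      have : C₄ = C₂ := circuit_subset_eq hC₄ h2 this
      exact (hC₄sub (this ▸ hhC2)).2 rfl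
    obtain ⟨w, hw⟩ := hC₃C₄
    have hm : (C₃ ∪ C₄).ncard < n := by
      rw [← hn]
      refine Set.ncard_lt_ncard (ssubset_of_subset_of_ne (union_subset
        (hC₃sub.trans diff_subset) hC₄C12) fun hEq => ?_) hfin
      have : f ∈ C₃ ∪ C₄ := hEq ▸ Set.mem_union_left _ hf.1
      rcases this with h | h
      · exact (hC₃sub h).2 rfl
      · exact hfC₄ h
    exact ih _ hm hC₃ hC₄ heC₃ hgC₄ hw ((circuit_finite hC₃).union (circuit_finite hC₄)) rfl

lemma connTo_refl (e : α) : ConnTo M e e := Or.inl rfl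

lemma connTo_symm (h : ConnTo M e f) : ConnTo M f e := by
  rcases h with rfl | ⟨C, hC, h1, h2⟩
  · exact Or.inl rfl
  · exact Or.inr ⟨C, hC, h2, h1⟩

lemma connTo_trans [M.Finite] (h1 : ConnTo M e f) (h2 : ConnTo M f g) : ConnTo M e g := by
  rcases h1 with rfl | ⟨C₁, hC₁, he1, hf1⟩
  · exact h2
  rcases h2 with rfl | ⟨C₂, hC₂, hf2, hg2⟩
  · exact Or.inr ⟨C₁, hC₁, he1, hf1⟩
  obtain ⟨C, hC, he, hg⟩ := exists_circuit_both hC₁ hC₂ he1 hg2 ⟨hf1, hf2⟩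
  exact Or.inr ⟨C, hC, he, hg⟩

lemma mem_ground_of_connTo (h : ConnTo M e f) (hne : e ≠ f) : f ∈ M.E := by
  rcases h with rfl | ⟨C, hC, _, h2⟩
  · exact absurd rfl hne
  · exact hC.1 h2

lemma mem_component_self (he : e ∈ M.E) : e ∈ component M e := ⟨he, connTo_refl e⟩

lemma component_subset_ground : component M e ⊆ M.E := fun _ h => h.1

lemma component_closed [M.Finite] (ha : a ∈ component M e) (hb : f ∈ M.E)
    (hab : ConnTo M a f) : f ∈ component M e := ⟨hb, connTo_trans ha.2 hab⟩

lemma component_eq [M.Finite] (hf : f ∈ component M e) : component M f = component M e := by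
  ext x
  exact ⟨fun hx => ⟨hx.1, connTo_trans hf.2 hx.2⟩,
    fun hx => ⟨hx.1, connTo_trans (connTo_symm hf.2) hx.2⟩⟩

/-! ### Rank additivity over components -/

lemma indep_union_closed [M.Finite] (hX : X ⊆ M.E)
    (hXc : ∀ a ∈ X, ∀ b ∈ M.E, ConnTo M a b → b ∈ X)
    (hIA : M.Indep I) (hIX : I ⊆ X) (hIB : M.Indep J) (hJX : J ∩ X = ∅) :
    M.Indep (I ∪ J) := by
  by_contra hdep
  obtain ⟨C, hCsub, hC⟩ := exists_circuit_subset
    (union_subset hIA.subset_ground hIB.subset_ground) hdep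
  obtain ⟨c, hc⟩ := circuit_nonempty hC
  by_cases hcX : c ∈ X
  · have hCX : C ⊆ X := by
      intro c' hc'
      exact hXc c hcX c' (hC.1 hc') (Or.inr ⟨C, hC, hc, hc'⟩)
    have : C ⊆ I := by
      intro c' hc'
      rcases hCsub hc' with h | h
      · exact h
      · exact absurd (Set.mem_inter h (hCX hc')) (by rw [hJX]; exact fun h => h)
    exact hC.2.1 (hIA.subset this)
  · have hCX : C ∩ X = ∅ := by
      by_contra hcon
      obtain ⟨c', hc'⟩ := Set.nonempty_iff_ne_empty.mpr hcon
      exact hcX (hXc c' hc'.2 c (hC.1 hc) (Or.inr ⟨C, hC, hc'.1, hc⟩))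
    have : C ⊆ J := by
      intro c' hc'
      rcases hCsub hc' with h | h
      · exact absurd (Set.mem_inter hc' (hIX h)) (by rw [hCX]; exact fun h => h)
      · exact h
    exact hC.2.1 (hIB.subset this)

lemma mrank_union_closed [M.Finite] (hX : X ⊆ M.E)
    (hXc : ∀ a ∈ X, ∀ b ∈ M.E, ConnTo M a b → b ∈ X)
    (hA : A ⊆ X) (hB : B ⊆ M.E \ X) :
    mrank M (A ∪ B) = mrank M A + mrank M B := by
  have hdisj : ∀ {P Q : Set α}, P ⊆ X → Q ∩ X = ∅ → Disjoint P Q := by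
    intro P Q hP hQ
    rw [Set.disjoint_iff_inter_eq_empty]
    by_contra h
    obtain ⟨w, hw⟩ := Set.nonempty_iff_ne_empty.mpr h
    have : w ∈ Q ∩ X := ⟨hw.2, hP hw.1⟩
    rw [hQ] at this; exact this
  have hBX : B ∩ X = ∅ := by
    rw [Set.eq_empty_iff_forall_notMem]
    exact fun w hw => (hB hw.1).2 hw.2
  refine le_antisymm (mrank_le fun I hIAB hI => ?_) ?_
  · have h1 : (I ∩ A).ncard ≤ mrank M A := le_mrank inter_subset_right (hI.subset inter_subset_left)
    have h2 : (I ∩ B).ncard ≤ mrank M B := le_mrank inter_subset_right (hI.subset inter_subset_left)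
    have hIeq : I = (I ∩ A) ∪ (I ∩ B) := by
      rw [← inter_union_distrib_left]; exact (inter_eq_left.mpr hIAB).symm
    have : I.ncard ≤ (I ∩ A).ncard + (I ∩ B).ncard := by
      calc I.ncard = ((I ∩ A) ∪ (I ∩ B)).ncard := by rw [← hIeq]
        _ ≤ _ := Set.ncard_union_le _ _
    omega
  · obtain ⟨IA, hIAX, hIA, hIAcard⟩ := exists_mrank_witness M A
    obtain ⟨IB, hIBX, hIB, hIBcard⟩ := exists_mrank_witness M B
    have hIBX' : IB ∩ X = ∅ := by
      rw [Set.eq_empty_iff_forall_notMem]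
      exact fun w hw => (hB (hIBX hw.1)).2 hw.2
    have hind := indep_union_closed hX hXc hIA (hIAX.trans hA) hIB hIBX'
    have := le_mrank (X := A ∪ B) (union_subset_union hIAX hIBX) hind
    rw [Set.ncard_union_eq (hdisj (hIAX.trans hA) hIBX')
      (indep_finite hIA) (indep_finite hIB)] at this
    omega

/-! ### Restriction -/

lemma mrank_restrict' (M : Matroid α) (R X : Set α) (hX : X ⊆ R) :
    mrank (M.restrict R) X = mrank M X := by
  unfold mrank
  congr 1
  ext n
  constructor
  · rintro ⟨I, hIX, hI, rfl⟩
    rw [Matroid.restrict_indep_iff] at hI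
    exact ⟨I, hIX, hI.1, rfl⟩
  · rintro ⟨I, hIX, hI, rfl⟩
    exact ⟨I, hIX, Matroid.restrict_indep_iff.mpr ⟨hI, hIX.trans hX⟩, rfl⟩

lemma circuit_restrict (hR : R ⊆ M.E) :
    IsCircuit (M.restrict R) C ↔ IsCircuit M C ∧ C ⊆ R := by
  constructor
  · rintro ⟨hCsub, hdep, hmin⟩
    rw [Matroid.restrict_ground_eq] at hCsub
    refine ⟨⟨hCsub.trans hR, fun h => hdep (Matroid.restrict_indep_iff.mpr ⟨h, hCsub⟩), ?_⟩, hCsub⟩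
    intro D hD
    have := hmin D hD
    rw [Matroid.restrict_indep_iff] at this
    exact this.1
  · rintro ⟨⟨hCsub, hdep, hmin⟩, hCR⟩
    refine ⟨by rw [Matroid.restrict_ground_eq]; exact hCR,
      fun h => hdep (Matroid.restrict_indep_iff.mp h).1, ?_⟩
    intro D hD
    exact Matroid.restrict_indep_iff.mpr ⟨hmin D hD, hD.subset.trans hCR⟩

lemma mconnected_restrict_component [M.Finite] (he : e ∈ M.E) :
    MConnected (M.restrict (component M e)) := by
  constructor
  · rw [Matroid.restrict_ground_eq]
    exact ⟨e, mem_component_self he⟩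
  · intro f hf g hg
    rw [Matroid.restrict_ground_eq] at hf hg
    by_cases hfg : f = g
    · exact Or.inl hfg
    · have h1 : ConnTo M f g := connTo_trans (connTo_symm hf.2) hg.2
      rcases h1 with h | ⟨C, hC, hfC, hgC⟩
      · exact Or.inl h
      · have hCcomp : C ⊆ component M e := by
          intro c hc
          exact ⟨hC.1 hc, connTo_trans hf.2 (Or.inr ⟨C, hC, hfC, hc⟩)⟩
        exact Or.inr ⟨C, (circuit_restrict component_subset_ground).mpr ⟨hC, hCcomp⟩, hfC, hgC⟩


end Circ

section Graph
open SimpleGraph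
/-! ### offRel generic lemmas -/

variable {V W : Type*}

lemma offRel_of_adj {G : SimpleGraph V} {v a b : V} (ha : a ≠ v) (hb : b ≠ v)
    (h : G.Adj a b) : offRel G v a b :=
  ⟨ha, hb, Adj.reachable (by exact h)⟩

lemma offRel_refl {G : SimpleGraph V} {v a : V} (ha : a ≠ v) : offRel G v a a :=
  ⟨ha, ha, Reachable.refl _⟩

lemma offRel_symm {G : SimpleGraph V} {v a b : V} (h : offRel G v a b) : offRel G v b a := by
  obtain ⟨ha, hb, hr⟩ := h
  exact ⟨hb, ha, hr.symm⟩

lemma offRel_trans {G : SimpleGraph V} {v a b c : V} (h1 : offRel G v a b)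
    (h2 : offRel G v b c) : offRel G v a c := by
  obtain ⟨ha, hb, hr⟩ := h1
  obtain ⟨hb', hc, hr'⟩ := h2
  exact ⟨ha, hc, hr.trans hr'⟩

lemma offRel_ne_left {G : SimpleGraph V} {v a b : V} (h : offRel G v a b) : a ≠ v := h.1

lemma offRel_ne_right {G : SimpleGraph V} {v a b : V} (h : offRel G v a b) : b ≠ v :=
  h.2.1

/-- Lift `offRel` through a graph map. -/
lemma offRel_lift {G : SimpleGraph V} {G' : SimpleGraph W} (f : V → W) {v : V} {v' : W}
    (hadj : ∀ a b, G.Adj a b → G'.Adj (f a) (f b)) (hf : ∀ a, f a = v' → a = v)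
    {a b : V} (h : offRel G v a b) : offRel G' v' (f a) (f b) := by
  obtain ⟨ha, hb, hr⟩ := h
  have hne : ∀ (u : {x : V // x ≠ v}), f u.1 ≠ v' := fun u hu => u.2 (hf u.1 hu)
  let φ : (G.comap (Subtype.val : {x : V // x ≠ v} → V)) →g
      (G'.comap (Subtype.val : {x : W // x ≠ v'} → W)) :=
    ⟨fun u => ⟨f u.1, hne u⟩, fun hadj' => hadj _ _ hadj'⟩
  exact ⟨fun h' => ha (hf a h'), fun h' => hb (hf b h'), hr.map φ⟩

/-- Project `offRel` through a vertex map that may collapse some edges. -/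
lemma offRel_proj {G' : SimpleGraph W} {G : SimpleGraph V} (f : W → V) {v' : W} {v : V}
    (h : ∀ a b : W, a ≠ v' → b ≠ v' → G'.Adj a b →
      f a ≠ v ∧ f b ≠ v ∧ (f a = f b ∨ G.Adj (f a) (f b)))
    {a b : W} (hr : offRel G' v' a b) : f a = f b ∨ offRel G v (f a) (f b) := by
  obtain ⟨ha, hb, ⟨p⟩⟩ := hr
  have key : ∀ {x y : {w : W // w ≠ v'}}
      (_ : (G'.comap (Subtype.val : {w : W // w ≠ v'} → W)).Walk x y),
      f x.1 = f y.1 ∨ offRel G v (f x.1) (f y.1) := by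
    intro x y p
    induction p with
    | nil => exact Or.inl rfl
    | @cons x₁ x₂ y₁ hadj p ih =>
      have h' := h x₁.1 x₂.1 x₁.2 x₂.2 hadj
      rcases h'.2.2 with heq | hGadj
      · rw [heq] at *
        exact ih
      · have step : offRel G v (f x₁.1) (f x₂.1) := offRel_of_adj h'.1 h'.2.1 hGadj
        rcases ih with heq | hrel
        · exact Or.inr (heq ▸ step)
        · exact Or.inr (offRel_trans step hrel)
  exact key p

/-! ### Parent-function trees -/

/-- The graph of a parent function. -/
def ptG (par : V → V) : SimpleGraph V where
  Adj u v := u ≠ v ∧ (par u = v ∨ par v = u)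
  symm := ⟨fun u v h => ⟨h.1.symm, h.2.symm⟩⟩
  loopless := ⟨fun v h => h.1 rfl⟩

lemma ptG_adj {par : V → V} {u v : V} :
    (ptG par).Adj u v ↔ u ≠ v ∧ (par u = v ∨ par v = u) := Iff.rfl

/-- A valid parent presentation of a rooted tree. -/
structure PT (par : V → V) (root : V) : Prop where
  fix : ∀ v, par v = v ↔ v = root
  reach : ∀ v, ∃ n, par^[n] v = root

variable {par : V → V} {root : V}

lemma PT.par_root (h : PT par root) : par root = root := (h.fix root).mpr rfl

lemma PT.iter_root (h : PT par root) (n : ℕ) : par^[n] root = root :=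
  Function.iterate_fixed h.par_root n

lemma PT.iter_stable (h : PT par root) {v : V} {n m : ℕ} (hn : par^[n] v = root)
    (hm : n ≤ m) : par^[m] v = root := by
  obtain ⟨k, rfl⟩ := Nat.exists_eq_add_of_le hm
  rw [Nat.add_comm, Function.iterate_add_apply, hn, h.iter_root]

lemma PT.no_cycle (h : PT par root) {v : V} {n : ℕ} (hn : 1 ≤ n) (hv : par^[n] v = v) :
    v = root := by
  obtain ⟨m, hm⟩ := h.reach v
  have hiter : ∀ k, par^[k * n] v = v := by
    intro k
    induction k with
    | zero => simp
    | succ k ih => rw [Nat.succ_mul, Function.iterate_add_apply, hv, ih]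
  have h1 : par^[m * n] v = v := hiter m
  have h2 : par^[m * n] v = root := h.iter_stable hm (Nat.le_mul_of_pos_right m hn)
  rw [h1] at h2; exact h2

lemma PT.no_two_cycle (h : PT par root) {u v : V} (huv : par u = v) (hvu : par v = u) :
    u = v := by
  by_contra hne
  have h2 : par^[2] u = u := by
    show par (par u) = u
    rw [huv, hvu]
  have hur := h.no_cycle (by norm_num) h2
  subst hur
  rw [h.par_root] at huv
  exact hne huv

open Classical in
/-- Height of a vertex: distance to the root along parents. -/
noncomputable def PT.ht (h : PT par root) (v : V) : ℕ := Nat.find (h.reach v)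

open Classical in
lemma PT.ht_spec (h : PT par root) (v : V) : par^[h.ht v] v = root :=
  Nat.find_spec (h.reach v)

open Classical in
lemma PT.ht_le (h : PT par root) {v : V} {n : ℕ} (hn : par^[n] v = root) : h.ht v ≤ n :=
  Nat.find_le hn

lemma PT.ht_root (h : PT par root) : h.ht root = 0 :=
  Nat.le_zero.mp (h.ht_le (by simp))

lemma PT.ht_pos (h : PT par root) {v : V} (hv : v ≠ root) : 1 ≤ h.ht v := by
  by_contra hc
  push_neg at hc
  interval_cases hn : h.ht v
  · have := h.ht_spec v
    rw [hn] at this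
    exact hv this

lemma PT.ht_par (h : PT par root) {v : V} (hv : v ≠ root) : h.ht v = h.ht (par v) + 1 := by
  have h1 := h.ht_pos hv
  have h2 := h.ht_spec v
  have h3 : par^[h.ht v - 1] (par v) = root := by
    have h4 : par^[h.ht v - 1 + 1] v = root := by
      have : h.ht v - 1 + 1 = h.ht v := by omega
      rw [this]; exact h2
    rw [Function.iterate_succ_apply] at h4
    exact h4
  have h4 : h.ht (par v) ≤ h.ht v - 1 := h.ht_le h3
  have h5 : h.ht v ≤ h.ht (par v) + 1 := by
    refine h.ht_le ?_
    rw [Function.iterate_succ_apply]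
    exact h.ht_spec (par v)
  omega

lemma PT.adj_par (h : PT par root) {v : V} (hv : v ≠ root) : (ptG par).Adj v (par v) := by
  refine ⟨fun hEq => hv ((h.fix v).mp hEq.symm), Or.inl rfl⟩

lemma PT.reachable_root (h : PT par root) (v : V) : (ptG par).Reachable v root := by
  generalize hn : h.ht v = n
  induction n generalizing v with
  | zero =>
    have := h.ht_spec v
    rw [hn] at this
    simp at this
    exact this ▸ Reachable.refl _
  | succ n ih =>
    have hv : v ≠ root := by
      intro hEq; rw [hEq, h.ht_root] at hn; exact Nat.succ_ne_zero n hn.symm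
    have hpar : h.ht (par v) = n := by
      have := h.ht_par hv; omega
    exact ((h.adj_par hv).reachable).trans (ih _ hpar)

lemma PT.connected (h : PT par root) : (ptG par).Connected := by
  rw [connected_iff_exists_forall_reachable]
  exact ⟨root, fun v => (h.reachable_root v).symm⟩

lemma PT.dist_root_le (h : PT par root) (v : V) : (ptG par).dist root v ≤ h.ht v := by
  rw [SimpleGraph.dist_comm]
  generalize hn : h.ht v = n
  induction n generalizing v with
  | zero =>
    have := h.ht_spec v; rw [hn] at this; simp at this
    simp [this]
  | succ n ih =>
    have hv : v ≠ root := by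
      intro hEq; rw [hEq, h.ht_root] at hn; exact Nat.succ_ne_zero n hn.symm
    have hpar : h.ht (par v) = n := by have := h.ht_par hv; omega
    calc (ptG par).dist v root ≤ (ptG par).dist v (par v) + (ptG par).dist (par v) root :=
          h.connected.dist_triangle
      _ ≤ 1 + n := by
          have hd1 : (ptG par).dist v (par v) = 1 := dist_eq_one_iff_adj.mpr (h.adj_par hv)
          have := ih (par v) hpar
          omega
      _ = n + 1 := by omega

/-- The set of descendants of `u`. -/
def PT.below (par : V → V) (u : V) : Set V := {w | ∃ n, par^[n] w = u}

lemma PT.mem_below_self (u : V) : u ∈ PT.below par u := ⟨0, rfl⟩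

lemma PT.par_mem_below (h : PT par root) {u w : V} (hw : w ∈ PT.below par u) (hne : w ≠ u) :
    par w ∈ PT.below par u := by
  obtain ⟨n, hn⟩ := hw
  rcases n with _ | n
  · exact absurd hn hne
  · exact ⟨n, by rw [← Function.iterate_succ_apply]; exact hn⟩

lemma PT.mem_below_of_par (h : PT par root) {u w : V} (hw : par w ∈ PT.below par u) :
    w ∈ PT.below par u := by
  obtain ⟨n, hn⟩ := hw
  exact ⟨n + 1, by rw [Function.iterate_succ_apply]; exact hn⟩

lemma PT.par_not_below (h : PT par root) {u : V} (hu : u ≠ root) :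
    par u ∉ PT.below par u := by
  rintro ⟨n, hn⟩
  have : par^[n + 1] u = u := by rw [Function.iterate_succ_apply]; exact hn
  exact hu (h.no_cycle (by omega) this)

lemma PT.isBridge (h : PT par root) {u v : V} (hadj : (ptG par).Adj u v) :
    (ptG par).IsBridge s(u, v) := by
  -- reduce to the case `par u = v`
  suffices key : ∀ u v : V, par u = v → u ≠ v → (ptG par).IsBridge s(u, v) by
    rcases hadj.2 with h1 | h1
    · exact key u v h1 hadj.ne
    · rw [Sym2.eq_swap]
      exact key v u h1 hadj.ne.symm
  clear hadj u v
  intro u v hpar hne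
  have hur : u ≠ root := fun hEq => hne (by rw [hEq] at hpar ⊢; rw [← hpar, h.par_root])
  rw [isBridge_iff]
  refine fun hreach => ?_
  -- membership in `below u` is invariant along walks in the deleted graph
  have inv : ∀ {a b : V}, ((ptG par) \ fromEdgeSet {s(u, v)}).Adj a b →
      (a ∈ PT.below par u ↔ b ∈ PT.below par u) := by
    intro a b hab
    obtain ⟨⟨hne', hor⟩, hnotin⟩ := hab
    have hne2 : s(a, b) ≠ s(u, v) := by
      intro hEq
      exact hnotin ((SimpleGraph.fromEdgeSet_adj _).mpr ⟨by simp [hEq], hne'⟩)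
    rcases hor with h1 | h1
    · -- par a = b
      have hau : a ≠ u := by
        intro rfl'
        subst rfl'
        rw [hpar] at h1
        exact hne2 (by rw [h1])
      constructor
      · intro hmem
        exact h1 ▸ h.par_mem_below hmem hau
      · intro hmem
        exact h.mem_below_of_par (h1 ▸ hmem)
    · -- par b = a
      have hbu : b ≠ u := by
        intro rfl'
        subst rfl'
        rw [hpar] at h1
        exact hne2 (by rw [h1, Sym2.eq_swap])
      constructor
      · intro hmem
        exact h.mem_below_of_par (h1 ▸ hmem)
      · intro hmem
        exact h1 ▸ h.par_mem_below hmem hbu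
  obtain ⟨p⟩ := hreach
  have walk_inv : ∀ {a b : V} (_ : ((ptG par) \ fromEdgeSet {s(u, v)}).Walk a b),
      a ∈ PT.below par u → b ∈ PT.below par u := by
    intro a b p
    induction p with
    | nil => exact id
    | cons hadj _ ih => exact fun hmem => ih ((inv hadj).mp hmem)
  have : v ∈ PT.below par u := walk_inv p (PT.mem_below_self u)
  rw [← hpar] at this
  exact h.par_not_below hur this

lemma PT.isTree (h : PT par root) : (ptG par).IsTree :=
  ⟨h.connected, isAcyclic_iff_forall_adj_isBridge.mpr fun _ _ hadj => h.isBridge hadj⟩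

/-! ### leaf helpers for parent trees -/

lemma PT.leaf_of_no_children (h : PT par root) {v : V}
    (hch : ∀ u, par u = v → u = v) : IsLeaf (ptG par) v := by
  intro a b ha hb
  have key : ∀ w, (ptG par).Adj v w → w = par v := by
    intro w hw
    rcases hw.2 with h1 | h1
    · exact h1.symm
    · exact absurd (hch w h1) hw.1.symm
  rw [key a ha, key b hb]

lemma PT.not_leaf_parent_child (h : PT par root) {v u : V} (hvr : v ≠ root)
    (hu : par u = v) (hune : u ≠ v) : ¬ IsLeaf (ptG par) v := by
  intro hleaf
  have h1 : (ptG par).Adj v (par v) := h.adj_par hvr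
  have h2 : (ptG par).Adj v u := ⟨Ne.symm hune, Or.inr hu⟩
  have := hleaf _ _ h1 h2
  -- par v = u, and par u = v : two-cycle
  have := h.no_two_cycle hu (this ▸ rfl)
  exact hune this

lemma PT.not_leaf_two_children (h : PT par root) {v a b : V} (hab : a ≠ b)
    (ha : par a = v) (hb : par b = v) (hav : a ≠ v) (hbv : b ≠ v) :
    ¬ IsLeaf (ptG par) v := by
  intro hleaf
  exact hab (hleaf a b ⟨fun hEq => hav hEq.symm, Or.inr ha⟩ ⟨fun hEq => hbv hEq.symm, Or.inr hb⟩)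

/-! ### eccentricity and recentering -/

noncomputable def ecc (G : SimpleGraph V) [Fintype V] (v : V) : ℕ :=
  Finset.univ.sup (G.dist v)

lemma dist_le_ecc {G : SimpleGraph V} [Fintype V] {v u : V} : G.dist v u ≤ ecc G v :=
  Finset.le_sup (Finset.mem_univ u)

lemma ecc_le {G : SimpleGraph V} [Fintype V] {v : V} {n : ℕ}
    (h : ∀ u, G.dist v u ≤ n) : ecc G v ≤ n :=
  Finset.sup_le fun u _ => h u

lemma exists_ecc_witness {G : SimpleGraph V} [Fintype V] [Nonempty V] (v : V) :
    ∃ u, ecc G v = G.dist v u := by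
  obtain ⟨u, _, hu⟩ := Finset.exists_mem_eq_sup Finset.univ Finset.univ_nonempty (G.dist v)
  exact ⟨u, hu⟩

lemma exists_min_ecc (G : SimpleGraph V) [Fintype V] [Nonempty V] :
    ∃ c : V, ∀ w, ecc G c ≤ ecc G w := by
  obtain ⟨c, _, hc⟩ := Finset.exists_min_image Finset.univ (ecc G) Finset.univ_nonempty
  exact ⟨c, fun w => hc w (Finset.mem_univ w)⟩


end Graph

section Minor
variable {α : Type*} {M N : Matroid α} {X Y U : Set α} {e : α}

lemma contractElem_finite [M.Finite] (hce : ContractElem M N e) : N.Finite :=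
  ⟨by rw [hce.1]; exact M.ground_finite.diff⟩

lemma union_diff_set {E : Set α} (hX : X ⊆ E) : X ∪ (E \ X) = E := by
  ext x
  constructor
  · rintro (h | h)
    · exact hX h
    · exact h.1
  · intro h
    by_cases hx : x ∈ X
    · exact Or.inl hx
    · exact Or.inr ⟨h, hx⟩

lemma union_diff_ground (hX : X ⊆ M.E) : X ∪ (M.E \ X) = M.E := union_diff_set hX

lemma ground_eq_insert (he : e ∈ M.E) (hEN : N.E = M.E \ {e}) : M.E = insert e N.E := by
  rw [hEN, Set.insert_diff_singleton, Set.insert_eq_self.mpr he]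

lemma diff_eq_insert_diff (he : e ∈ M.E) (hEN : N.E = M.E \ {e}) (heX : e ∉ X) :
    M.E \ X = insert e (N.E \ X) := by
  rw [hEN]
  ext x
  simp only [Set.mem_diff, Set.mem_insert_iff, Set.mem_singleton_iff]
  constructor
  · intro ⟨h1, h2⟩
    by_cases hx : x = e
    · exact Or.inl hx
    · exact Or.inr ⟨⟨h1, hx⟩, h2⟩
  · rintro (rfl | ⟨⟨h1, _⟩, h3⟩)
    · exact ⟨he, heX⟩
    · exact ⟨h1, h3⟩

lemma diff_insert_eq (he : e ∈ M.E) (hEN : N.E = M.E \ {e}) :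
    M.E \ insert e X = N.E \ X := by
  rw [hEN]
  ext x
  simp only [Set.mem_diff, Set.mem_insert_iff, Set.mem_singleton_iff]
  tauto

lemma mrank_contract [M.Finite] (hce : ContractElem M N e) (hnl : M.Indep {e})
    (hX : X ⊆ N.E) : mrank M (insert e X) = mrank N X + 1 := by
  haveI hNfin := contractElem_finite hce
  obtain ⟨hEN, hInd⟩ := hce
  have he : e ∈ M.E := hnl.subset_ground rfl
  obtain ⟨I, hIX, hI, hIcard⟩ := exists_mrank_witness N X
  have hI' := (hInd I).mp hI
  have heI : e ∉ I := fun h => (hI'.1 h).2 rfl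
  have hIfin : I.Finite := indep_finite hI
  have h1 : (insert e I).ncard = I.ncard + 1 := Set.ncard_insert_of_notMem heI hIfin
  have hge : mrank N X + 1 ≤ mrank M (insert e X) := by
    have := le_mrank (M := M) (X := insert e X) (Set.insert_subset_insert hIX) hI'.2
    omega
  obtain ⟨J, hJsub, hJX, hJ, hJcard⟩ := exists_mrank_extension hnl
    (Set.singleton_subset_iff.mpr (Set.mem_insert e X))
  have heJ : e ∈ J := hJsub rfl
  have hJfin : J.Finite := indep_finite hJ
  have hJ' : N.Indep (J \ {e}) := by
    refine (hInd _).mpr ⟨?_, by rwa [Set.insert_diff_singleton, Set.insert_eq_self.mpr heJ]⟩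
    exact Set.diff_subset_diff_left hJ.subset_ground
  have h2 : (J \ {e}).ncard + 1 = J.ncard := Set.ncard_diff_singleton_add_one heJ hJfin
  have h3 : J \ {e} ⊆ X := by
    intro x hx
    rcases hJX hx.1 with h | h
    · exact absurd h hx.2
    · exact h
  have hle := le_mrank h3 hJ'
  omega

lemma mrank_le_contract [M.Finite] (hce : ContractElem M N e) (hnl : M.Indep {e})
    (hX : X ⊆ N.E) : mrank M X ≤ mrank N X + 1 := by
  haveI := contractElem_finite hce
  exact (mrank_mono (Set.subset_insert _ _)).trans (le_of_eq (mrank_contract hce hnl hX))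

lemma mlambda_contract_notin [M.Finite] (hce : ContractElem M N e) (hnl : M.Indep {e})
    (hX : X ⊆ N.E) :
    mlambda M X (M.E \ X) ≤ mlambda N X (N.E \ X) + 1 := by
  haveI := contractElem_finite hce
  have he : e ∈ M.E := hnl.subset_ground rfl
  have hEN := hce.1
  have heX : e ∉ X := fun h => (hEN ▸ hX h).2 rfl
  have hXM : X ⊆ M.E := hX.trans (hEN ▸ Set.diff_subset)
  have e1 : X ∪ (M.E \ X) = M.E := union_diff_ground hXM
  have e2 : X ∪ (N.E \ X) = N.E := union_diff_ground hX
  have r1 : mrank M X ≤ mrank N X + 1 := mrank_le_contract hce hnl hX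
  have r2 : mrank M (M.E \ X) = mrank N (N.E \ X) + 1 := by
    rw [diff_eq_insert_diff he hEN heX]
    exact mrank_contract hce hnl Set.diff_subset
  have r3 : mrank M M.E = mrank N N.E + 1 := by
    rw [ground_eq_insert he hEN]
    exact mrank_contract hce hnl subset_rfl
  unfold mlambda
  rw [e1, e2, r2, r3]
  push_cast
  omega

lemma mlambda_contract_in [M.Finite] (hce : ContractElem M N e) (hnl : M.Indep {e})
    (hX : X ⊆ N.E) :
    mlambda M (insert e X) (M.E \ insert e X) ≤ mlambda N X (N.E \ X) + 1 := by
  haveI := contractElem_finite hce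
  have he : e ∈ M.E := hnl.subset_ground rfl
  have hEN := hce.1
  have hXM : insert e X ⊆ M.E := Set.insert_subset he (hX.trans (hEN ▸ Set.diff_subset))
  have e1 : insert e X ∪ (M.E \ insert e X) = M.E := union_diff_ground hXM
  have e2 : X ∪ (N.E \ X) = N.E := union_diff_ground hX
  have r1 : mrank M (insert e X) = mrank N X + 1 := mrank_contract hce hnl hX
  have r2 : mrank M (M.E \ insert e X) ≤ mrank N (N.E \ X) + 1 := by
    rw [diff_insert_eq he hEN]
    exact mrank_le_contract hce hnl Set.diff_subset
  have r3 : mrank M M.E = mrank N N.E + 1 := by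
    rw [ground_eq_insert he hEN]
    exact mrank_contract hce hnl subset_rfl
  unfold mlambda
  rw [e1, e2, r1, r3]
  push_cast
  omega

lemma restrict_del_finite [M.Finite] : (M.restrict (M.E \ {e})).Finite :=
  ⟨by rw [Matroid.restrict_ground_eq]; exact M.ground_finite.diff⟩

lemma mlambda_delete_notin [M.Finite] (he : e ∈ M.E) (hX : X ⊆ M.E \ {e}) :
    mlambda M X (M.E \ X) ≤
      mlambda (M.restrict (M.E \ {e})) X ((M.E \ {e}) \ X) + 1 := by
  have hEN : (M.restrict (M.E \ {e})).E = M.E \ {e} := Matroid.restrict_ground_eq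
  have heX : e ∉ X := fun h => (hX h).2 rfl
  have hXM : X ⊆ M.E := hX.trans Set.diff_subset
  have e1 : X ∪ (M.E \ X) = M.E := union_diff_ground hXM
  have e2 : X ∪ ((M.E \ {e}) \ X) = M.E \ {e} := union_diff_set hX
  have hins : M.E \ X = insert e ((M.E \ {e}) \ X) := by
    have := diff_eq_insert_diff (M := M) (N := M.restrict (M.E \ {e})) he hEN heX
    rwa [hEN] at this
  have r2 : mrank M (M.E \ X) ≤ mrank M ((M.E \ {e}) \ X) + 1 := by
    rw [hins]; exact mrank_insert_le
  have r3 : mrank M (M.E \ {e}) ≤ mrank M M.E := mrank_mono Set.diff_subset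
  have rr1 : mrank (M.restrict (M.E \ {e})) X = mrank M X := mrank_restrict' M _ X hX
  have rr2 : mrank (M.restrict (M.E \ {e})) ((M.E \ {e}) \ X) = mrank M ((M.E \ {e}) \ X) :=
    mrank_restrict' M _ _ Set.diff_subset
  have rr3 : mrank (M.restrict (M.E \ {e})) (X ∪ ((M.E \ {e}) \ X)) = mrank M (M.E \ {e}) := by
    rw [e2]; exact mrank_restrict' M _ _ subset_rfl
  unfold mlambda
  rw [e1, rr1, rr2, rr3]
  push_cast
  omega

lemma mlambda_delete_in [M.Finite] (he : e ∈ M.E) (hX : X ⊆ M.E \ {e}) :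
    mlambda M (insert e X) (M.E \ insert e X) ≤
      mlambda (M.restrict (M.E \ {e})) X ((M.E \ {e}) \ X) + 1 := by
  have hEN : (M.restrict (M.E \ {e})).E = M.E \ {e} := Matroid.restrict_ground_eq
  have hXM : insert e X ⊆ M.E := Set.insert_subset he (hX.trans Set.diff_subset)
  have e1 : insert e X ∪ (M.E \ insert e X) = M.E := union_diff_ground hXM
  have e2 : X ∪ ((M.E \ {e}) \ X) = M.E \ {e} := union_diff_set hX
  have hdiff : M.E \ insert e X = (M.E \ {e}) \ X := by
    have := diff_insert_eq (M := M) (N := M.restrict (M.E \ {e})) (X := X) he hEN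
    rwa [hEN] at this
  have r1 : mrank M (insert e X) ≤ mrank M X + 1 := mrank_insert_le
  have r3 : mrank M (M.E \ {e}) ≤ mrank M M.E := mrank_mono Set.diff_subset
  have rr1 : mrank (M.restrict (M.E \ {e})) X = mrank M X := mrank_restrict' M _ X hX
  have rr2 : mrank (M.restrict (M.E \ {e})) ((M.E \ {e}) \ X) = mrank M ((M.E \ {e}) \ X) :=
    mrank_restrict' M _ _ Set.diff_subset
  have rr3 : mrank (M.restrict (M.E \ {e})) (X ∪ ((M.E \ {e}) \ X)) = mrank M (M.E \ {e}) := by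
    rw [e2]; exact mrank_restrict' M _ _ subset_rfl
  unfold mlambda
  rw [e1, rr1, rr2, rr3, hdiff]
  push_cast
  omega

lemma mlambda_closed_zero [M.Finite] (hU : U ⊆ M.E)
    (hUc : ∀ a ∈ U, ∀ b ∈ M.E, ConnTo M a b → b ∈ U) :
    mlambda M U (M.E \ U) = 0 := by
  have e1 : U ∪ (M.E \ U) = M.E := union_diff_ground hU
  have r1 : mrank M (U ∪ (M.E \ U)) = mrank M U + mrank M (M.E \ U) :=
    mrank_union_closed hU hUc subset_rfl subset_rfl
  unfold mlambda
  rw [r1]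
  push_cast
  omega

lemma mlambda_union_components [M.Finite] (hU : U ⊆ M.E)
    (hUc : ∀ a ∈ U, ∀ b ∈ M.E, ConnTo M a b → b ∈ U)
    (hY : Y ⊆ M.E \ U) (hYc : ∀ a ∈ Y, ∀ b ∈ M.E, ConnTo M a b → b ∈ Y)
    (hX : X ⊆ U) :
    mlambda M (X ∪ Y) (M.E \ (X ∪ Y)) = mlambda (M.restrict U) X (U \ X) := by
  have hYM : Y ⊆ M.E := hY.trans Set.diff_subset
  have hXM : X ⊆ M.E := hX.trans hU
  have e0 : (X ∪ Y) ∪ (M.E \ (X ∪ Y)) = M.E := union_diff_ground (Set.union_subset hXM hYM)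
  have e1 : M.E \ (X ∪ Y) = (U \ X) ∪ ((M.E \ U) \ Y) := by
    ext x
    simp only [Set.mem_diff, Set.mem_union]
    constructor
    · rintro ⟨hxE, hxXY⟩
      push_neg at hxXY
      by_cases hxU : x ∈ U
      · exact Or.inl ⟨hxU, hxXY.1⟩
      · exact Or.inr ⟨⟨hxE, hxU⟩, hxXY.2⟩
    · rintro (⟨h1, h2⟩ | ⟨⟨h1, h1'⟩, h2⟩)
      · refine ⟨hU h1, ?_⟩
        rintro (hx | hx)
        · exact h2 hx
        · exact (hY hx).2 h1
      · refine ⟨h1, ?_⟩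
        rintro (hx | hx)
        · exact h1' (hX hx)
        · exact h2 hx
  have ra : mrank M (X ∪ Y) = mrank M X + mrank M Y :=
    mrank_union_closed hU hUc hX hY
  have rb : mrank M ((U \ X) ∪ ((M.E \ U) \ Y)) =
      mrank M (U \ X) + mrank M ((M.E \ U) \ Y) :=
    mrank_union_closed hU hUc Set.diff_subset
      (fun x hx => hx.1 : (M.E \ U) \ Y ⊆ M.E \ U)
  have rc : mrank M M.E = mrank M U + mrank M (M.E \ U) := by
    have := mrank_union_closed hU hUc (subset_rfl : U ⊆ U) (subset_rfl : M.E \ U ⊆ M.E \ U)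
    rwa [union_diff_ground hU] at this
  have rd : mrank M (M.E \ U) = mrank M Y + mrank M ((M.E \ U) \ Y) := by
    have hsplit : Y ∪ ((M.E \ U) \ Y) = M.E \ U := by
      ext x
      simp only [Set.mem_union, Set.mem_diff]
      constructor
      · rintro (hx | hx)
        · exact hY hx
        · exact hx.1
      · intro hx
        by_cases hxY : x ∈ Y
        · exact Or.inl hxY
        · exact Or.inr ⟨hx, hxY⟩
    have := mrank_union_closed (X := Y) hYM hYc (subset_rfl : Y ⊆ Y)
      (fun x hx => ⟨hx.1.1, hx.2⟩ : (M.E \ U) \ Y ⊆ M.E \ Y)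
    rwa [hsplit] at this
  have eU : X ∪ (U \ X) = U := union_diff_set hX
  have s1 : mrank (M.restrict U) X = mrank M X := mrank_restrict' M U X hX
  have s2 : mrank (M.restrict U) (U \ X) = mrank M (U \ X) := mrank_restrict' M U _ Set.diff_subset
  have s3 : mrank (M.restrict U) (X ∪ (U \ X)) = mrank M U := by
    rw [eU]; exact mrank_restrict' M U U subset_rfl
  unfold mlambda
  rw [e0, e1, ra, rb, s1, s2, s3]
  push_cast
  omega

end Minor

section Constr
open SimpleGraph

variable {α : Type*} {M N : Matroid α} {e f : α}

lemma offRel_of_reachable {V W : Type*} {G : SimpleGraph V} {G' : SimpleGraph W}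
    (f : V → W) {v' : W} (hadj : ∀ a b, G.Adj a b → G'.Adj (f a) (f b))
    (hne : ∀ a, f a ≠ v') {u w : V} (h : G.Reachable u w) :
    offRel G' v' (f u) (f w) := by
  let φ : G →g (G'.comap (Subtype.val : {x : W // x ≠ v'} → W)) :=
    ⟨fun a => ⟨f a, hne a⟩, fun hadj' => hadj _ _ hadj'⟩
  exact ⟨hne u, hne w, h.map φ⟩

/-- A pre-decomposition: a parent-presented tree of height at most `d` with
connectivity bound `r`, whose root is not a leaf unless the tree is trivial. -/
structure PD {α : Type*} (M : Matroid α) (d r : ℕ) where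
  V : Type
  fin : Fintype V
  par : V → V
  root : V
  pt : PT par root
  hht : ∀ v, pt.ht v ≤ d
  label : V → α
  label_mem : ∀ v, IsLeaf (ptG par) v → label v ∈ M.E
  label_inj : ∀ v w, IsLeaf (ptG par) v → IsLeaf (ptG par) w → label v = label w → v = w
  label_surj : ∀ x ∈ M.E, ∃ v, IsLeaf (ptG par) v ∧ label v = x
  conn : ∀ v, ¬ IsLeaf (ptG par) v → ∀ S : Set V, UnionOfParts (ptG par) v S →
    mlambda M (label '' {u ∈ S | IsLeaf (ptG par) u})
      (M.E \ label '' {u ∈ S | IsLeaf (ptG par) u}) ≤ r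
  good : ¬ IsLeaf (ptG par) root ∨ Subsingleton V

def PD.mono {d r d' r' : ℕ} (pd : PD M d r) (hd : d ≤ d') (hr : r ≤ r') : PD M d' r' :=
  { pd with
    hht := fun v => (pd.hht v).trans hd
    conn := fun v hv S hS => (pd.conn v hv S hS).trans (by exact_mod_cast hr) }

lemma PD.toDecomp {d r : ℕ} (pd : PD M d r) : ∃ d', d' ≤ d ∧ Nonempty (Decomp M d' r) := by
  haveI := pd.fin
  haveI : Nonempty pd.V := ⟨pd.root⟩
  obtain ⟨c, hc⟩ := exists_min_ecc (ptG pd.par)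
  refine ⟨ecc (ptG pd.par) c, ?_, ⟨{
    V := pd.V
    fin := pd.fin
    G := ptG pd.par
    tree := pd.pt.isTree
    center := c
    radius_le := fun v => dist_le_ecc
    radius_ge := ?_
    label := pd.label
    label_mem := pd.label_mem
    label_inj := pd.label_inj
    label_surj := pd.label_surj
    conn := pd.conn }⟩⟩
  · calc ecc (ptG pd.par) c ≤ ecc (ptG pd.par) pd.root := hc pd.root
      _ ≤ d := ecc_le fun v => (pd.pt.dist_root_le v).trans (pd.hht v)
  · intro w
    obtain ⟨u, hu⟩ := exists_ecc_witness (G := ptG pd.par) w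
    exact ⟨u, hu ▸ hc w⟩

/-- The trivial decomposition of a one-element matroid. -/
lemma singlePD [M.Finite] (hE : M.E = {e}) : Nonempty (PD M 0 0) := by
  have hpt : PT (id : PUnit.{1} → PUnit.{1}) PUnit.unit :=
    ⟨fun v => iff_of_true rfl rfl, fun v => ⟨0, rfl⟩⟩
  have hnoadj : ∀ u v : PUnit.{1}, ¬ (ptG id).Adj u v := by
    intro u v h
    exact h.1 rfl
  have hleaf : ∀ v : PUnit.{1}, IsLeaf (ptG id) v :=
    fun v u w hu _ => absurd hu (hnoadj _ _)
  exact ⟨{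
    V := PUnit
    fin := inferInstance
    par := id
    root := PUnit.unit
    pt := hpt
    hht := fun v => le_of_eq (hpt.ht_root)
    label := fun _ => e
    label_mem := fun v _ => by rw [hE]; rfl
    label_inj := fun v w _ _ _ => rfl
    label_surj := fun x hx => ⟨PUnit.unit, hleaf _, by rw [hE] at hx; exact hx.symm⟩
    conn := fun v hv => absurd (hleaf v) hv
    good := Or.inr inferInstance }⟩

/-- The star decomposition of a two-element matroid. -/
lemma starPD [M.Finite] (he : e ∈ M.E) (hf : f ∈ M.E) (hne : e ≠ f)
    (hE : M.E = {e, f}) : Nonempty (PD M 1 1) := by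
  classical
  set par : Option Bool → Option Bool := fun _ => none with hpar
  have hpt : PT par none := by
    refine ⟨fun v => eq_comm, fun v => ⟨1, rfl⟩⟩
  have hparnone : ∀ u : Option Bool, par u = none := fun _ => rfl
  have hleafsome : ∀ b : Bool, IsLeaf (ptG par) (some b) := by
    intro b
    refine hpt.leaf_of_no_children (fun u hu => ?_)
    exact absurd hu (by simp [hpar])
  have hrootnotleaf : ¬ IsLeaf (ptG par) none := by
    refine hpt.not_leaf_two_children (a := some true) (b := some false) (by simp) rfl rfl
      (by simp) (by simp)
  set lab : Option Bool → α := fun v => if v = some true then e else f with hlab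
  have hlabmem : ∀ v, IsLeaf (ptG par) v → lab v ∈ M.E := by
    intro v hv
    by_cases h : v = some true
    · simp [hlab, h, he]
    · simp [hlab, h, hf]
  refine ⟨{
    V := Option Bool
    fin := inferInstance
    par := par
    root := none
    pt := hpt
    hht := fun v => hpt.ht_le (show par^[1] v = none from rfl)
    label := lab
    label_mem := hlabmem
    label_inj := ?_
    label_surj := ?_
    conn := ?_
    good := Or.inl hrootnotleaf }⟩
  · intro v w hv hw hvw
    have hv' : v ≠ none := fun h => hrootnotleaf (h ▸ hv)
    have hw' : w ≠ none := fun h => hrootnotleaf (h ▸ hw)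
    obtain ⟨b, rfl⟩ := Option.ne_none_iff_exists'.mp hv'
    obtain ⟨c, rfl⟩ := Option.ne_none_iff_exists'.mp hw'
    cases b <;> cases c <;> simp_all [hlab]
  · intro x hx
    rw [hE] at hx
    rcases hx with rfl | rfl
    · exact ⟨some true, hleafsome true, by simp [hlab]⟩
    · exact ⟨some false, hleafsome false, by simp [hlab, hne]⟩
  · intro v hv S hS
    set X := lab '' {u ∈ S | IsLeaf (ptG par) u} with hX
    have hXsub : X ⊆ M.E := by
      rintro _ ⟨u, hu, rfl⟩
      exact hlabmem u hu.2
    have hXfin : X.Finite := M.ground_finite.subset hXsub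
    have hcard : M.E.ncard = 2 := by rw [hE]; exact Set.ncard_pair hne
    by_cases hXn : X.ncard ≤ 1
    · calc mlambda M X (M.E \ X) ≤ (X.ncard : ℤ) := mlambda_le_ncard hXfin
        _ ≤ 1 := by exact_mod_cast hXn
    · have hXE : X = M.E := by
        refine Set.eq_of_subset_of_ncard_le hXsub ?_ M.ground_finite
        omega
      calc mlambda M X (M.E \ X) ≤ ((M.E \ X).ncard : ℤ) :=
            mlambda_le_ncard_right (M.ground_finite.diff)
        _ ≤ 1 := by
            rw [hXE, Set.diff_self]
            simp

/-- Attach a pendant leaf labelled `e` at the root of a decomposition of `N`. -/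
lemma pendantPD [M.Finite] {dN r : ℕ} (pd : PD N dN r) (hd : 1 ≤ dN)
    (hEN : N.E = M.E \ {e}) (heM : e ∈ M.E)
    (hgood : ¬ IsLeaf (ptG pd.par) pd.root)
    (hlam0 : ∀ X, X ⊆ N.E → mlambda M X (M.E \ X) ≤ mlambda N X (N.E \ X) + 1)
    (hlam1 : ∀ X, X ⊆ N.E →
      mlambda M (insert e X) (M.E \ insert e X) ≤ mlambda N X (N.E \ X) + 1) :
    Nonempty (PD M dN (r + 1)) := by
  classical
  haveI := pd.fin
  set par' : Option pd.V → Option pd.V :=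
    fun x => x.elim (some pd.root) (fun v => some (pd.par v)) with hpar'
  have hparnone : par' none = some pd.root := rfl
  have hparsome : ∀ v, par' (some v) = some (pd.par v) := fun _ => rfl
  have hiter : ∀ (n : ℕ) (v : pd.V), par'^[n] (some v) = some (pd.par^[n] v) := by
    intro n
    induction n with
    | zero => intro v; rfl
    | succ n ih =>
      intro v
      rw [Function.iterate_succ_apply, Function.iterate_succ_apply, hparsome, ih]
  have hpt : PT par' (some pd.root) := by
    constructor
    · intro v
      cases v with
      | none => exact iff_of_false (by simp [hparnone]) (by simp)
      | some v =>
        rw [hparsome]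
        simp only [Option.some_inj]
        exact pd.pt.fix v
    · intro v
      cases v with
      | none => exact ⟨1, by simp [hparnone]⟩
      | some v => exact ⟨pd.pt.ht v, by rw [hiter, pd.pt.ht_spec]⟩
  have adjss : ∀ u w : pd.V,
      (ptG par').Adj (some u) (some w) ↔ (ptG pd.par).Adj u w := by
    intro u w
    show (some u ≠ some w ∧ (par' (some u) = some w ∨ par' (some w) = some u)) ↔ _
    rw [hparsome, hparsome]
    show _ ↔ (u ≠ w ∧ (pd.par u = w ∨ pd.par w = u))
    simp
  have adjnone : ∀ x, (ptG par').Adj none x ↔ x = some pd.root := by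
    intro x
    constructor
    · rintro ⟨h1, h2 | h2⟩
      · rw [← h2, hparnone]
      · cases x with
        | none => exact absurd rfl h1
        | some v => exact absurd h2 (by rw [hparsome]; simp)
    · rintro rfl
      exact ⟨by simp, Or.inl hparnone⟩
  have leafnone : IsLeaf (ptG par') none := by
    intro a b ha hb
    rw [(adjnone a).mp ha, (adjnone b).mp hb]
  have hrootne : ∀ v, IsLeaf (ptG pd.par) v → v ≠ pd.root := fun v hv hEq => hgood (hEq ▸ hv)
  have leafsome : ∀ v, IsLeaf (ptG par') (some v) ↔ IsLeaf (ptG pd.par) v := by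
    intro v
    constructor
    · intro h u w hu hw
      exact Option.some_inj.mp (h (some u) (some w) ((adjss v u).mpr hu) ((adjss v w).mpr hw))
    · intro h a b ha hb
      have key : ∀ x, (ptG par').Adj (some v) x → ∃ u, x = some u ∧ (ptG pd.par).Adj v u := by
        intro x hx
        cases x with
        | none =>
          have h2 := (adjnone (some v)).mp hx.symm
          exact absurd (Option.some_inj.mp h2) (hrootne v h)
        | some u => exact ⟨u, rfl, (adjss v u).mp hx⟩
      obtain ⟨u1, rfl, hu1⟩ := key a ha
      obtain ⟨u2, rfl, hu2⟩ := key b hb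
      rw [h u1 u2 hu1 hu2]
  have rootnotleaf : ¬ IsLeaf (ptG par') (some pd.root) :=
    fun h => hgood ((leafsome pd.root).mp h)
  set lab : Option pd.V → α := fun x => x.elim e pd.label with hlabdef
  refine ⟨{
    V := Option pd.V
    fin := inferInstance
    par := par', root := some pd.root, pt := hpt
    hht := ?_
    label := lab
    label_mem := ?_
    label_inj := ?_
    label_surj := ?_
    conn := ?_
    good := Or.inl rootnotleaf }⟩
  · intro v
    cases v with
    | none =>
      refine le_trans (hpt.ht_le (n := 1) ?_) hd
      simp [hparnone]
    | some v => exact le_trans (hpt.ht_le (by rw [hiter, pd.pt.ht_spec])) (pd.hht v)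
  · intro v hv
    cases v with
    | none => exact heM
    | some v =>
      have := pd.label_mem v ((leafsome v).mp hv)
      rw [hEN] at this
      exact this.1
  · intro v w hv hw hvw
    cases v with
    | none =>
      cases w with
      | none => rfl
      | some w =>
        exfalso
        have := pd.label_mem w ((leafsome w).mp hw)
        rw [hEN] at this
        exact this.2 (Set.mem_singleton_iff.mpr hvw.symm)
    | some v =>
      cases w with
      | none =>
        exfalso
        have := pd.label_mem v ((leafsome v).mp hv)
        rw [hEN] at this
        exact this.2 (Set.mem_singleton_iff.mpr hvw)
      | some w =>
        exact congrArg some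
          (pd.label_inj v w ((leafsome v).mp hv) ((leafsome w).mp hw) hvw)
  · intro x hx
    by_cases hxe : x = e
    · exact ⟨none, leafnone, hxe.symm⟩
    · have hxN : x ∈ N.E := by rw [hEN]; exact ⟨hx, hxe⟩
      obtain ⟨v, hvleaf, hvlab⟩ := pd.label_surj x hxN
      exact ⟨some v, (leafsome v).mpr hvleaf, hvlab⟩
  · intro v' hv' S hS
    cases v' with
    | none => exact absurd leafnone hv'
    | some v =>
    have hvnl : ¬ IsLeaf (ptG pd.par) v := fun h => hv' ((leafsome v).mpr h)
    set S' : Set pd.V := {u | some u ∈ S} with hS'def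
    have hS' : UnionOfParts (ptG pd.par) v S' := by
      constructor
      · exact fun h => hS.1 h
      · intro a ha b hab
        have hlift := offRel_lift (f := (some : pd.V → Option pd.V)) (v := v) (v' := some v)
          (fun a b h => (adjss a b).mpr h) (fun a h => Option.some_inj.mp h) hab
        exact hS.2 (some a) ha (some b) hlift
    have hconnN := pd.conn v hvnl S' hS'
    set X : Set α := pd.label '' {u ∈ S' | IsLeaf (ptG pd.par) u} with hXdef
    have hXN : X ⊆ N.E := by
      rintro _ ⟨u, hu, rfl⟩
      exact pd.label_mem u hu.2
    by_cases hnone : none ∈ S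
    · have hXeq : lab '' {u ∈ S | IsLeaf (ptG par') u} = insert e X := by
        ext x
        simp only [hXdef, Set.mem_image, Set.mem_setOf_eq, Set.mem_insert_iff]
        constructor
        · rintro ⟨u, ⟨huS, hul⟩, rfl⟩
          cases u with
          | none => exact Or.inl rfl
          | some w => exact Or.inr ⟨w, ⟨huS, (leafsome w).mp hul⟩, rfl⟩
        · rintro (rfl | ⟨w, ⟨hwS, hwl⟩, rfl⟩)
          · exact ⟨none, ⟨hnone, leafnone⟩, rfl⟩
          · exact ⟨some w, ⟨hwS, (leafsome w).mpr hwl⟩, rfl⟩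
      rw [hXeq]
      have h1 := hlam1 X hXN
      push_cast
      linarith [hconnN]
    · have hXeq : lab '' {u ∈ S | IsLeaf (ptG par') u} = X := by
        ext x
        simp only [hXdef, Set.mem_image, Set.mem_setOf_eq]
        constructor
        · rintro ⟨u, ⟨huS, hul⟩, rfl⟩
          cases u with
          | none => exact absurd huS hnone
          | some w => exact ⟨w, ⟨huS, (leafsome w).mp hul⟩, rfl⟩
        · rintro ⟨w, ⟨hwS, hwl⟩, rfl⟩
          exact ⟨some w, ⟨hwS, (leafsome w).mpr hwl⟩, rfl⟩
      rw [hXeq]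
      have h0 := hlam0 X hXN
      push_cast
      linarith [hconnN]

/-- Hang decompositions of the components from a new root. -/
lemma hangPD [M.Finite] {m : ℕ} (hm : 2 ≤ m) (comp : Fin m → Set α) {d r : ℕ} (hd : 1 ≤ d)
    (hsub : ∀ i, comp i ⊆ M.E)
    (hclosed : ∀ i, ∀ a ∈ comp i, ∀ b ∈ M.E, ConnTo M a b → b ∈ comp i)
    (hdisj : ∀ i j, i ≠ j → comp i ∩ comp j = ∅)
    (hcov : M.E ⊆ ⋃ i, comp i)
    (pds : ∀ i, PD (M.restrict (comp i)) (d - 1) r)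
    (a₀ : α) : Nonempty (PD M d r) := by
  classical
  haveI : ∀ i, Fintype (pds i).V := fun i => (pds i).fin
  have hEr : ∀ i, (M.restrict (comp i)).E = comp i := fun i => Matroid.restrict_ground_eq
  set par' : (Option (Σ i : Fin m, (pds i).V)) → (Option (Σ i : Fin m, (pds i).V)) := fun x => x.elim none
    (fun p => if p.2 = (pds p.1).root then none else some ⟨p.1, (pds p.1).par p.2⟩) with hpar'
  have hparnone : par' none = none := rfl
  have hparsome : ∀ (i : Fin m) (v : (pds i).V), par' (some ⟨i, v⟩) =
      if v = (pds i).root then none else some ⟨i, (pds i).par v⟩ := fun _ _ => rfl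
  have hiter : ∀ (n : ℕ) (i : Fin m) (v : (pds i).V),
      (pds i).par^[n] v = (pds i).root → par'^[n + 1] (some ⟨i, v⟩) = none := by
    intro n
    induction n with
    | zero =>
      intro i v hv
      rw [Function.iterate_succ_apply, Function.iterate_zero_apply, hparsome,
        if_pos (show v = (pds i).root from hv)]
    | succ n ih =>
      intro i v hv
      by_cases hroot : v = (pds i).root
      · rw [Function.iterate_succ_apply, hparsome, if_pos hroot]
        exact Function.iterate_fixed hparnone (n + 1)
      · rw [Function.iterate_succ_apply, hparsome, if_neg hroot]
        refine ih i ((pds i).par v) ?_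
        rw [← Function.iterate_succ_apply]
        exact hv
  have hpt : PT par' none := by
    constructor
    · intro v
      cases v with
      | none => exact iff_of_true hparnone rfl
      | some p =>
        obtain ⟨i, v⟩ := p
        rw [hparsome]
        by_cases hroot : v = (pds i).root
        · rw [if_pos hroot]
          exact iff_of_false (fun h => nomatch h) (fun h => nomatch h)
        · rw [if_neg hroot]
          refine iff_of_false (fun hEq => ?_) (by simp)
          have : (pds i).par v = v := by
            have := Option.some_inj.mp hEq
            exact eq_of_heq (Sigma.mk.inj_iff.mp this).2
          exact hroot (((pds i).pt.fix v).mp this)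
    · intro v
      cases v with
      | none => exact ⟨0, rfl⟩
      | some p =>
        obtain ⟨i, v⟩ := p
        exact ⟨(pds i).pt.ht v + 1, hiter _ i v ((pds i).pt.ht_spec v)⟩
  have adjss : ∀ (i : Fin m) (u w : (pds i).V),
      (ptG par').Adj (some ⟨i, u⟩) (some ⟨i, w⟩) ↔ (ptG (pds i).par).Adj u w := by
    intro i u w
    constructor
    · rintro ⟨h1, h2 | h2⟩
      · rw [hparsome] at h2
        by_cases hroot : u = (pds i).root
        · rw [if_pos hroot] at h2; exact absurd h2 (by simp)
        · rw [if_neg hroot] at h2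
          have h3 : (pds i).par u = w := eq_of_heq (Sigma.mk.inj_iff.mp (Option.some_inj.mp h2)).2
          exact ⟨fun hEq => h1 (by rw [hEq]), Or.inl h3⟩
      · rw [hparsome] at h2
        by_cases hroot : w = (pds i).root
        · rw [if_pos hroot] at h2; exact absurd h2 (by simp)
        · rw [if_neg hroot] at h2
          have h3 : (pds i).par w = u := eq_of_heq (Sigma.mk.inj_iff.mp (Option.some_inj.mp h2)).2
          exact ⟨fun hEq => h1 (by rw [hEq]), Or.inr h3⟩
    · rintro ⟨h1, h2 | h2⟩
      · have hroot : u ≠ (pds i).root := by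
          intro hEq
          rw [hEq, (pds i).pt.par_root] at h2
          exact h1 (h2 ▸ hEq)
        refine ⟨fun hEq => h1 (eq_of_heq (Sigma.mk.inj_iff.mp (Option.some_inj.mp hEq)).2), Or.inl ?_⟩
        rw [hparsome, if_neg hroot, h2]
      · have hroot : w ≠ (pds i).root := by
          intro hEq
          rw [hEq, (pds i).pt.par_root] at h2
          exact h1 (h2 ▸ hEq).symm
        refine ⟨fun hEq => h1 (eq_of_heq (Sigma.mk.inj_iff.mp (Option.some_inj.mp hEq)).2), Or.inr ?_⟩
        rw [hparsome, if_neg hroot, h2]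
  have adjcross : ∀ (i j : Fin m) (u : (pds i).V) (w : (pds j).V), i ≠ j →
      ¬ (ptG par').Adj (some ⟨i, u⟩) (some ⟨j, w⟩) := by
    intro i j u w hij
    rintro ⟨h1, h2 | h2⟩
    · rw [hparsome] at h2
      by_cases hroot : u = (pds i).root
      · rw [if_pos hroot] at h2; exact (by simp : (none : (Option (Σ i : Fin m, (pds i).V))) ≠ _) h2
      · rw [if_neg hroot] at h2
        exact hij (Sigma.mk.inj_iff.mp (Option.some_inj.mp h2)).1
    · rw [hparsome] at h2
      by_cases hroot : w = (pds j).root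
      · rw [if_pos hroot] at h2; exact (by simp : (none : (Option (Σ i : Fin m, (pds i).V))) ≠ _) h2
      · rw [if_neg hroot] at h2
        exact hij (Sigma.mk.inj_iff.mp (Option.some_inj.mp h2)).1.symm
  have adjnone : ∀ x : (Option (Σ i : Fin m, (pds i).V)), (ptG par').Adj none x ↔ ∃ i, x = some ⟨i, (pds i).root⟩ := by
    intro x
    constructor
    · rintro ⟨h1, h2 | h2⟩
      · rw [hparnone] at h2
        exact absurd h2 h1
      · cases x with
        | none => exact absurd rfl h1
        | some p =>
          obtain ⟨i, v⟩ := p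
          rw [hparsome] at h2
          by_cases hroot : v = (pds i).root
          · exact ⟨i, by rw [hroot]⟩
          · rw [if_neg hroot] at h2
            exact absurd h2 (by simp)
    · rintro ⟨i, rfl⟩
      exact ⟨by simp, Or.inr (by rw [hparsome, if_pos rfl])⟩
  have nonleafnone : ¬ IsLeaf (ptG par') none := by
    intro h
    have h0 : (ptG par').Adj none (some ⟨⟨0, by omega⟩, (pds ⟨0, by omega⟩).root⟩) :=
      (adjnone _).mpr ⟨⟨0, by omega⟩, rfl⟩
    have h1 : (ptG par').Adj none (some ⟨⟨1, by omega⟩, (pds ⟨1, by omega⟩).root⟩) :=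
      (adjnone _).mpr ⟨⟨1, by omega⟩, rfl⟩
    have h2 := (Sigma.mk.inj_iff.mp (Option.some_inj.mp (h _ _ h0 h1))).1
    have h3 := congrArg Fin.val h2
    norm_num at h3
  have leafsome : ∀ (i : Fin m) (v : (pds i).V),
      IsLeaf (ptG par') (some ⟨i, v⟩) ↔ IsLeaf (ptG (pds i).par) v := by
    intro i v
    constructor
    · intro h u w hu hw
      have := h (some ⟨i, u⟩) (some ⟨i, w⟩) ((adjss i v u).mpr hu) ((adjss i v w).mpr hw)
      exact eq_of_heq (Sigma.mk.inj_iff.mp (Option.some_inj.mp this)).2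
    · intro h a b ha hb
      have key : ∀ x, (ptG par').Adj (some ⟨i, v⟩) x →
          (x = none ∧ v = (pds i).root) ∨ ∃ u, x = some ⟨i, u⟩ ∧ (ptG (pds i).par).Adj v u := by
        intro x hx
        cases x with
        | none =>
          obtain ⟨j, hj⟩ := (adjnone _).mp hx.symm
          have hji : j = i := (Sigma.mk.inj_iff.mp (Option.some_inj.mp hj)).1.symm
          subst hji
          exact Or.inl ⟨rfl, eq_of_heq (Sigma.mk.inj_iff.mp (Option.some_inj.mp hj)).2⟩
        | some p =>
          obtain ⟨j, u⟩ := p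
          by_cases hij : i = j
          · subst hij
            exact Or.inr ⟨u, rfl, (adjss i v u).mp hx⟩
          · exact absurd hx (adjcross i j v u hij)
      have hsub1 : v = (pds i).root → Subsingleton (pds i).V := by
        intro hroot
        rcases (pds i).good with hg | hg
        · exact absurd (hroot ▸ h) hg
        · exact hg
      rcases key a ha with ⟨rfl, hroot⟩ | ⟨u1, rfl, hu1⟩
      · rcases key b hb with ⟨rfl, _⟩ | ⟨u2, rfl, hu2⟩
        · rfl
        · haveI := hsub1 hroot
          exact absurd (Subsingleton.elim v u2) hu2.1
      · rcases key b hb with ⟨rfl, hroot⟩ | ⟨u2, rfl, hu2⟩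
        · haveI := hsub1 hroot
          exact absurd (Subsingleton.elim v u1) hu1.1
        · rw [h u1 u2 hu1 hu2]
  set lab : (Option (Σ i : Fin m, (pds i).V)) → α := fun x => x.elim a₀ (fun p => (pds p.1).label p.2) with hlabdef
  refine ⟨{
    V := (Option (Σ i : Fin m, (pds i).V))
    fin := inferInstance
    par := par', root := none, pt := hpt
    hht := ?_
    label := lab
    label_mem := ?_
    label_inj := ?_
    label_surj := ?_
    conn := ?_
    good := Or.inl nonleafnone }⟩
  · intro v
    cases v with
    | none => rw [hpt.ht_root]; omega
    | some p =>
      obtain ⟨i, v⟩ := p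
      have h1 : hpt.ht (some ⟨i, v⟩) ≤ (pds i).pt.ht v + 1 :=
        hpt.ht_le (hiter _ i v ((pds i).pt.ht_spec v))
      have h2 := (pds i).hht v
      omega
  · intro v hv
    cases v with
    | none => exact absurd hv nonleafnone
    | some p =>
      obtain ⟨i, v⟩ := p
      have := (pds i).label_mem v ((leafsome i v).mp hv)
      rw [hEr i] at this
      exact hsub i this
  · intro v w hv hw hvw
    cases v with
    | none => exact absurd hv nonleafnone
    | some p =>
      cases w with
      | none => exact absurd hw nonleafnone
      | some q =>
        obtain ⟨i, v⟩ := p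
        obtain ⟨j, w⟩ := q
        have hvi := (pds i).label_mem v ((leafsome i v).mp hv)
        have hwj := (pds j).label_mem w ((leafsome j w).mp hw)
        rw [hEr i] at hvi
        rw [hEr j] at hwj
        by_cases hij : i = j
        · subst hij
          have := (pds i).label_inj v w ((leafsome i v).mp hv) ((leafsome i w).mp hw) hvw
          rw [this]
        · exfalso
          have : lab (some ⟨i, v⟩) ∈ comp i ∩ comp j := ⟨hvi, hvw ▸ hwj⟩
          rw [hdisj i j hij] at this
          exact this
  · intro x hx
    obtain ⟨i, hxi⟩ := Set.mem_iUnion.mp (hcov hx)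
    have : x ∈ (M.restrict (comp i)).E := by rw [hEr i]; exact hxi
    obtain ⟨v, hvleaf, hvlab⟩ := (pds i).label_surj x this
    exact ⟨some ⟨i, v⟩, (leafsome i v).mpr hvleaf, hvlab⟩
  · intro v' hv' S hS
    -- all-or-nothing for the trace of `S` on each component avoiding `v'`
    have allnothing : ∀ (k : Fin m), (∀ p : (pds k).V, some ⟨k, p⟩ ≠ v') →
        ∀ u w : (pds k).V, some ⟨k, u⟩ ∈ S → some ⟨k, w⟩ ∈ S ∨ some ⟨k, w⟩ = v' := by
      intro k hk u w hu
      left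
      refine hS.2 _ hu _ ?_
      refine offRel_of_reachable (fun p : (pds k).V => (some ⟨k, p⟩ : (Option (Σ i : Fin m, (pds i).V))))
        (fun a b h => (adjss k a b).mpr h) hk ?_
      exact ((pds k).pt.connected).preconnected u w
    cases v' with
    | none =>
      set P : Set (Fin m) := {k | ∃ u : (pds k).V,
        (some ⟨k, u⟩ : Option (Σ i : Fin m, (pds i).V)) ∈ S} with hPdef
      set U : Set α := ⋃ k ∈ P, comp k with hUdef
      have hfull : ∀ k ∈ P, ∀ w : (pds k).V,
          (some ⟨k, w⟩ : Option (Σ i : Fin m, (pds i).V)) ∈ S := by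
        rintro k ⟨u, hu⟩ w
        have hkne : ∀ p : (pds k).V, some ⟨k, p⟩ ≠ (none : (Option (Σ i : Fin m, (pds i).V))) :=
          fun p h => nomatch h
        rcases allnothing k hkne u w hu with h | h
        · exact h
        · exact absurd h (hkne w)
      have hXeq : lab '' {u ∈ S | IsLeaf (ptG par') u} = U := by
        ext x
        constructor
        · rintro ⟨u, ⟨huS, hul⟩, rfl⟩
          cases u with
          | none => exact absurd hul nonleafnone
          | some p =>
            obtain ⟨j, w⟩ := p
            refine Set.mem_biUnion (show j ∈ P from ⟨w, huS⟩) ?_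
            have := (pds j).label_mem w ((leafsome j w).mp hul)
            rwa [hEr j] at this
        · intro hx
          simp only [hUdef, Set.mem_iUnion, exists_prop] at hx
          obtain ⟨k, hkP, hxk⟩ := hx
          have : x ∈ (M.restrict (comp k)).E := by rw [hEr k]; exact hxk
          obtain ⟨w, hwleaf, hwlab⟩ := (pds k).label_surj x this
          exact ⟨some ⟨k, w⟩, ⟨hfull k hkP w, (leafsome k w).mpr hwleaf⟩, hwlab⟩
      rw [hXeq]
      have hUsub : U ⊆ M.E := by
        intro x hx
        simp only [hUdef, Set.mem_iUnion, exists_prop] at hx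
        obtain ⟨k, _, hxk⟩ := hx
        exact hsub k hxk
      have hUc : ∀ a ∈ U, ∀ b ∈ M.E, ConnTo M a b → b ∈ U := by
        intro a ha b hb hab
        simp only [hUdef, Set.mem_iUnion, exists_prop] at ha
        obtain ⟨k, hkP, hak⟩ := ha
        exact Set.mem_biUnion hkP (hclosed k a hak b hb hab)
      rw [mlambda_closed_zero hUsub hUc]
      exact_mod_cast Nat.zero_le r
    | some p =>
    obtain ⟨i, v⟩ := p
    have hvnl : ¬ IsLeaf (ptG (pds i).par) v := fun h => hv' ((leafsome i v).mpr h)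
    set Si : Set (pds i).V := {u | some ⟨i, u⟩ ∈ S} with hSidef
    have hSi : UnionOfParts (ptG (pds i).par) v Si := by
      constructor
      · exact fun h => hS.1 h
      · intro a ha b hab
        have hlift := offRel_lift (f := fun u : (pds i).V => (some ⟨i, u⟩ : (Option (Σ i : Fin m, (pds i).V))))
          (v := v) (v' := some ⟨i, v⟩)
          (fun a b h => (adjss i a b).mpr h)
          (fun a h => eq_of_heq (Sigma.mk.inj_iff.mp (Option.some_inj.mp h)).2) hab
        exact hS.2 _ ha _ hlift
    have hconni := (pds i).conn v hvnl Si hSi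
    set Xi : Set α := (pds i).label '' {u ∈ Si | IsLeaf (ptG (pds i).par) u} with hXidef
    have hXi : Xi ⊆ comp i := by
      rintro _ ⟨u, hu, rfl⟩
      have := (pds i).label_mem u hu.2
      rwa [hEr i] at this
    set P : Set (Fin m) := {k | k ≠ i ∧ ∃ u : (pds k).V,
      (some ⟨k, u⟩ : Option (Σ i : Fin m, (pds i).V)) ∈ S} with hPdef
    set Y : Set α := ⋃ k ∈ P, comp k with hYdef
    have hfull : ∀ k ∈ P, ∀ w : (pds k).V,
        (some ⟨k, w⟩ : Option (Σ i : Fin m, (pds i).V)) ∈ S := by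
      rintro k ⟨hki, u, hu⟩ w
      have hkne : ∀ p : (pds k).V,
          (some ⟨k, p⟩ : Option (Σ i : Fin m, (pds i).V)) ≠ some ⟨i, v⟩ := by
        intro p hEq
        exact hki (Sigma.mk.inj_iff.mp (Option.some_inj.mp hEq)).1
      rcases allnothing k hkne u w hu with h | h
      · exact h
      · exact absurd h (hkne w)
    have hXeq : lab '' {u ∈ S | IsLeaf (ptG par') u} = Xi ∪ Y := by
      ext x
      constructor
      · rintro ⟨u, ⟨huS, hul⟩, rfl⟩
        cases u with
        | none => exact absurd hul nonleafnone
        | some p =>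
          obtain ⟨j, w⟩ := p
          by_cases hij : j = i
          · subst hij
            left
            exact ⟨w, ⟨huS, (leafsome j w).mp hul⟩, rfl⟩
          · right
            refine Set.mem_biUnion (show j ∈ P from ⟨hij, w, huS⟩) ?_
            have := (pds j).label_mem w ((leafsome j w).mp hul)
            rwa [hEr j] at this
      · rintro (hx | hx)
        · obtain ⟨w, ⟨hwS, hwl⟩, rfl⟩ := hx
          exact ⟨some ⟨i, w⟩, ⟨hwS, (leafsome i w).mpr hwl⟩, rfl⟩
        · simp only [hYdef, Set.mem_iUnion, exists_prop] at hx
          obtain ⟨k, hkP, hxk⟩ := hx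
          have : x ∈ (M.restrict (comp k)).E := by rw [hEr k]; exact hxk
          obtain ⟨w, hwleaf, hwlab⟩ := (pds k).label_surj x this
          exact ⟨some ⟨k, w⟩, ⟨hfull k hkP w, (leafsome k w).mpr hwleaf⟩, hwlab⟩
    rw [hXeq]
    have hYsub : Y ⊆ M.E \ comp i := by
      intro x hx
      simp only [hYdef, Set.mem_iUnion, exists_prop] at hx
      obtain ⟨k, hkP, hxk⟩ := hx
      refine ⟨hsub k hxk, fun hxi => ?_⟩
      have : x ∈ comp k ∩ comp i := ⟨hxk, hxi⟩
      rw [hdisj k i hkP.1] at this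
      exact this
    have hYc : ∀ a ∈ Y, ∀ b ∈ M.E, ConnTo M a b → b ∈ Y := by
      intro a ha b hb hab
      simp only [hYdef, Set.mem_iUnion, exists_prop] at ha
      obtain ⟨k, hkP, hak⟩ := ha
      exact Set.mem_biUnion hkP (hclosed k a hak b hb hab)
    have heq := mlambda_union_components (hsub i) (hclosed i) hYsub hYc hXi
    rw [heq]
    have : (M.restrict (comp i)).E = comp i := hEr i
    calc mlambda (M.restrict (comp i)) Xi (comp i \ Xi)
        = mlambda (M.restrict (comp i)) Xi ((M.restrict (comp i)).E \ Xi) := by rw [this]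
      _ ≤ r := hconni

end Constr


section Main
variable {α : Type*}

lemma cddLE_pos {M : Matroid α} {d : ℕ} (h : CddLE M d) : 1 ≤ d := by
  induction h with
  | single M e d hE hd => exact hd
  | disconn M d hne hnc hcomp ih =>
    obtain ⟨e, he⟩ := hne
    exact ih e he
  | contr M N e d heM hind hce hcdd ih => omega
  | del M e d heM hcdd ih => omega

lemma cddLE_nonempty {M : Matroid α} {d : ℕ} (h : CddLE M d) : M.E.Nonempty := by
  cases h with
  | single M e d hE hd => exact ⟨e, by rw [hE]; rfl⟩
  | disconn M d hne _ _ => exact hne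
  | contr M N e d heM _ _ _ => exact ⟨e, heM⟩
  | del M e d heM _ => exact ⟨e, heM⟩

lemma PD.ground_subsingleton {M : Matroid α} {d r : ℕ} (pd : PD M d r)
    (hs : Subsingleton pd.V) {x y : α} (hx : x ∈ M.E) (hy : y ∈ M.E) : x = y := by
  obtain ⟨v, hv, rfl⟩ := pd.label_surj x hx
  obtain ⟨w, hw, rfl⟩ := pd.label_surj y hy
  rw [Subsingleton.elim v w]

lemma main {M : Matroid α} {d : ℕ} (h : CddLE M d) :
    M.Finite → Nonempty (PD M d d) ∧ (MConnected M → Nonempty (PD M (d - 1) d)) := by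
  induction h with
  | single M e d hE hd =>
    intro hfin
    haveI := hfin
    obtain ⟨pd⟩ := singlePD hE
    exact ⟨⟨pd.mono (by omega) (by omega)⟩, fun _ => ⟨pd.mono (by omega) (by omega)⟩⟩
  | contr M N e d heM hind hce hcdd ih =>
    intro hfin
    haveI := hfin
    haveI hNfin : N.Finite := contractElem_finite hce
    have hd1 : 1 ≤ d := cddLE_pos hcdd
    obtain ⟨pd⟩ := (ih hNfin).1
    rcases pd.good with hgood | hsub
    · obtain ⟨pd'⟩ := pendantPD pd hd1 hce.1 heM hgood
        (fun X hX => mlambda_contract_notin hce hind hX)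
        (fun X hX => mlambda_contract_in hce hind hX)
      exact ⟨⟨pd'.mono (by omega) (by omega)⟩, fun _ => ⟨pd'.mono (by omega) (by omega)⟩⟩
    · obtain ⟨f, hf⟩ := cddLE_nonempty hcdd
      have hfM : f ∈ M.E ∧ f ∉ ({e} : Set α) := by
        have := hf
        rw [hce.1] at this
        exact this
      have hne : e ≠ f := fun hEq => hfM.2 (Set.mem_singleton_iff.mpr hEq.symm)
      have hNE : N.E = {f} := by
        apply Set.eq_singleton_iff_nonempty_unique_mem.mpr
        exact ⟨⟨f, hf⟩, fun y hy => pd.ground_subsingleton hsub hy hf⟩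
      have hEf : M.E = {e, f} := by
        rw [ground_eq_insert heM hce.1, hNE]
      obtain ⟨pd'⟩ := starPD heM hfM.1 hne hEf
      exact ⟨⟨pd'.mono (by omega) (by omega)⟩, fun _ => ⟨pd'.mono (by omega) (by omega)⟩⟩
  | del M e d heM hcdd ih =>
    intro hfin
    haveI := hfin
    haveI hNfin : (M.restrict (M.E \ {e})).Finite := restrict_del_finite
    have hd1 : 1 ≤ d := cddLE_pos hcdd
    have hEN : (M.restrict (M.E \ {e})).E = M.E \ {e} := Matroid.restrict_ground_eq
    obtain ⟨pd⟩ := (ih hNfin).1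
    rcases pd.good with hgood | hsub
    · obtain ⟨pd'⟩ := pendantPD pd hd1 hEN heM hgood
        (fun X hX => mlambda_delete_notin heM (hEN ▸ hX))
        (fun X hX => mlambda_delete_in heM (hEN ▸ hX))
      exact ⟨⟨pd'.mono (by omega) (by omega)⟩, fun _ => ⟨pd'.mono (by omega) (by omega)⟩⟩
    · obtain ⟨f, hf⟩ := cddLE_nonempty hcdd
      have hfM : f ∈ M.E ∧ f ∉ ({e} : Set α) := by
        have := hf
        rw [hEN] at this
        exact this
      have hne : e ≠ f := fun hEq => hfM.2 (Set.mem_singleton_iff.mpr hEq.symm)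
      have hNE : (M.restrict (M.E \ {e})).E = {f} := by
        apply Set.eq_singleton_iff_nonempty_unique_mem.mpr
        exact ⟨⟨f, hf⟩, fun y hy => pd.ground_subsingleton hsub hy hf⟩
      have hEf : M.E = {e, f} := by
        rw [ground_eq_insert heM hEN, hNE]
      obtain ⟨pd'⟩ := starPD heM hfM.1 hne hEf
      exact ⟨⟨pd'.mono (by omega) (by omega)⟩, fun _ => ⟨pd'.mono (by omega) (by omega)⟩⟩
  | disconn M d hne hnc hcomp ih =>
    intro hfin
    haveI := hfin
    refine ⟨?_, fun hconn => absurd hconn hnc⟩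
    obtain ⟨x₀, hx₀⟩ := hne
    have hd1 : 1 ≤ d := cddLE_pos (hcomp x₀ hx₀)
    have hcfin : ∀ e : α, (M.restrict (component M e)).Finite := fun e =>
      ⟨by rw [Matroid.restrict_ground_eq]; exact M.ground_finite.subset component_subset_ground⟩
    have hconncomp : ∀ e ∈ M.E, Nonempty (PD (M.restrict (component M e)) (d - 1) d) :=
      fun e he => (ih e he (hcfin e)).2 (mconnected_restrict_component he)
    have h𝒞fin : ((fun x => component M x) '' M.E).Finite := M.ground_finite.image _
    set F : Finset (Set α) := h𝒞fin.toFinset with hF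
    set m := F.card with hm
    set comp : Fin m → Set α := fun i => (F.equivFin.symm i : Set α) with hcompdef
    have hcompmem : ∀ i, ∃ x ∈ M.E, component M x = comp i := by
      intro i
      exact h𝒞fin.mem_toFinset.mp (F.equivFin.symm i).2
    have hxy : ∃ x ∈ M.E, ∃ y ∈ M.E, ¬ ConnTo M x y := by
      by_contra hc
      push_neg at hc
      exact hnc ⟨⟨x₀, hx₀⟩, hc⟩
    have hm2 : 2 ≤ m := by
      obtain ⟨x, hx, y, hy, hxyn⟩ := hxy
      have hdif : component M x ≠ component M y := by
        intro hEq
        exact hxyn (by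
          have hyy : y ∈ component M y := mem_component_self hy
          rw [← hEq] at hyy
          exact hyy.2)
      have hxF : component M x ∈ F := h𝒞fin.mem_toFinset.mpr ⟨x, hx, rfl⟩
      have hyF : component M y ∈ F := h𝒞fin.mem_toFinset.mpr ⟨y, hy, rfl⟩
      exact Finset.one_lt_card.mpr ⟨_, hxF, _, hyF, hdif⟩
    have hsub : ∀ i, comp i ⊆ M.E := by
      intro i
      obtain ⟨xi, _, hci⟩ := hcompmem i
      rw [← hci]
      exact component_subset_ground
    have hclosed : ∀ i, ∀ a ∈ comp i, ∀ b ∈ M.E, ConnTo M a b → b ∈ comp i := by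
      intro i a ha b hb hab
      obtain ⟨xi, _, hci⟩ := hcompmem i
      rw [← hci] at ha ⊢
      exact component_closed ha hb hab
    have hdisj : ∀ i j, i ≠ j → comp i ∩ comp j = ∅ := by
      intro i j hij
      have hcne : comp i ≠ comp j := by
        intro hEq
        exact hij (F.equivFin.symm.injective (Subtype.ext hEq))
      by_contra hcon
      obtain ⟨z, hz⟩ := Set.nonempty_iff_ne_empty.mpr hcon
      obtain ⟨xi, _, hci⟩ := hcompmem i
      obtain ⟨xj, _, hcj⟩ := hcompmem j
      apply hcne
      rw [← hci, ← hcj]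
      rw [← component_eq (show z ∈ component M xi from hci ▸ hz.1),
        ← component_eq (show z ∈ component M xj from hcj ▸ hz.2)]
    have hcov : M.E ⊆ ⋃ i, comp i := by
      intro x hx
      have hxF : component M x ∈ F := h𝒞fin.mem_toFinset.mpr ⟨x, hx, rfl⟩
      refine Set.mem_iUnion.mpr ⟨F.equivFin ⟨_, hxF⟩, ?_⟩
      have hcc : comp (F.equivFin ⟨_, hxF⟩) = component M x := by
        show ((F.equivFin.symm (F.equivFin ⟨component M x, hxF⟩) : F) : Set α) = component M x
        rw [Equiv.symm_apply_apply]
      rw [hcc]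
      exact mem_component_self hx
    have pdsN : ∀ i, Nonempty (PD (M.restrict (comp i)) (d - 1) d) := by
      intro i
      obtain ⟨xi, hxi, hci⟩ := hcompmem i
      rw [← hci]
      exact hconncomp xi hxi
    have pds : ∀ i, PD (M.restrict (comp i)) (d - 1) d :=
      fun i => Classical.choice (pdsN i)
    exact hangPD hm2 comp hd1 hsub hclosed hdisj hcov pds x₀

end Main

end BD

/-- Branch-depth is at most contraction-deletion-depth. -/
theorem stmt13 {α : Type*} (M : Matroid α) [M.Finite] (d : ℕ)
    (h : CddLE M d) : HasBranchDepthLE M d := by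
  obtain ⟨pd⟩ := (BD.main h ‹M.Finite›).1
  obtain ⟨d', hd', ⟨dec⟩⟩ := pd.toDecomp
  exact ⟨d', d, hd', le_rfl, ⟨dec⟩⟩
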